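/- arXiv:2604.12550 — 9 statements merged into one kernel-verified Lean document; each statement's English description precedes it below -/
import Mathlib

section
/- Every irreducible representation over ℂ of a finite quandle Q is finite-dimensional. -/
open scoped Quandles
/-- The inner automorphism group of a rack/quandle `Q`: the subgroup of permutations
of `Q` generated by the left translations `L_x = Rack.act' x`. -/
def QdlInn (Q : Type*) [Rack Q] : Subgroup (Equiv.Perm Q) :=
  Subgroup.closure (Set.range (Rack.act' (R := Q)))

/-- The quandle morphism `θ : Q → Conj (Inn Q)`, `x ↦ L_x`. -/
def QdlTheta (Q : Type*) [Rack Q] : ShelfHom Q (Quandle.Conj (QdlInn Q)) where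
  toFun x := ⟨Rack.act' x, Subgroup.subset_closure ⟨x, rfl⟩⟩
  map_act' := by
    intro x y
    simp only [Quandle.conj_act_eq_conj]
    exact Subtype.ext (Rack.ad_conj x y)

/-- The induced group morphism `θ_{G(Q)} : G(Q) → Inn(Q)`. -/
def QdlThetaG (Q : Type*) [Rack Q] : Rack.EnvelGroup Q →* QdlInn Q :=
  Rack.toEnvelGroup.map (QdlTheta Q)

/-- `Z₀`, the kernel of `θ_{G(Q)}`. -/
def QdlZ0 (Q : Type*) [Rack Q] : Subgroup (Rack.EnvelGroup Q) :=
  (QdlThetaG Q).ker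

section Reps

variable {Q : Type*} {V : Type*} [AddCommGroup V] [Module ℂ V]

/-- `ρ : Q → GL(V)` is a quandle (rack) representation: `ρ(x ◃ y) = ρ(x) ρ(y) ρ(x)⁻¹`. -/
def IsQdlRep [Shelf Q] (ρ : Q → (V →ₗ[ℂ] V)ˣ) : Prop :=
  ∀ x y : Q, ρ (x ◃ y) = ρ x * ρ y * (ρ x)⁻¹

/-- A family `ρ : Q → GL(V)` is irreducible if the only subspaces invariant
under all `ρ x` are `0` and `V`. -/
def QdlIrred (ρ : Q → (V →ₗ[ℂ] V)ˣ) : Prop :=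
  ∀ W : Submodule ℂ V, (∀ x : Q, ∀ v ∈ W, (ρ x : V →ₗ[ℂ] V) v ∈ W) → W = ⊥ ∨ W = ⊤

/-- A group representation `σ : G →* GL(V)` is irreducible if the only subspaces
invariant under all `σ g` are `0` and `V`. -/
def GrpIrred {G : Type*} [Group G] (σ : G →* (V →ₗ[ℂ] V)ˣ) : Prop :=
  ∀ W : Submodule ℂ V, (∀ g : G, ∀ v ∈ W, (σ g : V →ₗ[ℂ] V) v ∈ W) → W = ⊥ ∨ W = ⊤

end Reps

/-- A character of a quandle: a map `χ : Q → ℂˣ` with `χ(x ◃ y) = χ(y)`. -/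
def QdlChar {Q : Type*} [Shelf Q] (χ : Q → ℂˣ) : Prop :=
  ∀ x y : Q, χ (x ◃ y) = χ y

section QdlAux

set_option linter.unusedSectionVars false


variable {Q : Type*} {V : Type*} [AddCommGroup V] [Module ℂ V]

variable [Quandle Q] {ρ : Q → (V →ₗ[ℂ] V)ˣ}

/-- product of `ρ` along a list -/
def qdlProd (ρ : Q → (V →ₗ[ℂ] V)ˣ) (l : List Q) : (V →ₗ[ℂ] V)ˣ := (l.map ρ).prod

lemma qdlProd_nil (ρ : Q → (V →ₗ[ℂ] V)ˣ) : qdlProd ρ [] = 1 := rfl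

lemma qdlProd_cons (ρ : Q → (V →ₗ[ℂ] V)ˣ) (x : Q) (l : List Q) :
    qdlProd ρ (x :: l) = ρ x * qdlProd ρ l := by simp [qdlProd]

lemma qdlProd_append (ρ : Q → (V →ₗ[ℂ] V)ˣ) (a b : List Q) :
    qdlProd ρ (a ++ b) = qdlProd ρ a * qdlProd ρ b := by simp [qdlProd]

lemma qdlProd_replicate (ρ : Q → (V →ₗ[ℂ] V)ˣ) (k : ℕ) (x : Q) :
    qdlProd ρ (List.replicate k x) = (ρ x) ^ k := by simp [qdlProd]

lemma qdl_swap (hρ : IsQdlRep ρ) (x y : Q) : ρ x * ρ y = ρ (x ◃ y) * ρ x := by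
  rw [hρ x y, inv_mul_cancel_right]

lemma qdl_pow_act (hρ : IsQdlRep ρ) (x : Q) : ∀ (k : ℕ) (y : Q),
    (ρ x) ^ k * ρ y = ρ ((Rack.act' x ^ k) y) * (ρ x) ^ k
  | 0, y => by simp
  | (k+1), y => by
    have h1 : (Rack.act' x ^ (k+1)) y = x ◃ ((Rack.act' x ^ k) y) := by
      rw [pow_succ']; simp [Equiv.Perm.mul_apply]
    rw [pow_succ', mul_assoc, qdl_pow_act hρ x k y, ← mul_assoc, qdl_swap hρ, h1, mul_assoc,
      ← pow_succ']

lemma qdl_central [Finite Q] (hρ : IsQdlRep ρ) (x y : Q) :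
    Commute ((ρ x) ^ Nat.card (Equiv.Perm Q)) (ρ y) := by
  have := qdl_pow_act hρ x (Nat.card (Equiv.Perm Q)) y
  rw [pow_card_eq_one'] at this
  simpa [Commute, SemiconjBy] using this

lemma qdl_commute_prod {c : (V →ₗ[ℂ] V)ˣ} (hc : ∀ y, Commute c (ρ y)) (l : List Q) :
    Commute c (qdlProd ρ l) := by
  induction l with
  | nil => simpa [qdlProd_nil] using Commute.one_right c
  | cons y t ih => rw [qdlProd_cons]; exact (hc y).mul_right ih

lemma qdl_push (hρ : IsQdlRep ρ) (x : Q) (l : List Q) :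
    ρ x * qdlProd ρ l = qdlProd ρ (l.map (fun y => x ◃ y)) * ρ x := by
  induction l with
  | nil => simp [qdlProd_nil]
  | cons y t ih =>
    rw [qdlProd_cons, ← mul_assoc, qdl_swap hρ, mul_assoc, ih, List.map_cons, qdlProd_cons,
      mul_assoc]

lemma qdl_gather [DecidableEq Q] (hρ : IsQdlRep ρ) (x : Q) (n : ℕ) : ∀ (l : List Q),
    l.length ≤ n →
    ∃ l' : List Q, qdlProd ρ l = qdlProd ρ l' * (ρ x) ^ (l.count x) ∧
      l'.length + l.count x = l.length ∧ x ∉ l' := by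
  induction n with
  | zero =>
    intro l hl
    have : l = [] := List.eq_nil_of_length_eq_zero (Nat.le_zero.mp hl)
    subst this
    exact ⟨[], by simp, by simp, by simp⟩
  | succ n ih =>
    intro l hl
    match l with
    | [] => exact ⟨[], by simp, by simp, by simp⟩
    | y :: t =>
      simp only [List.length_cons, Nat.add_le_add_iff_right] at hl
      by_cases hxy : y = x
      · subst hxy
        have hinj : Function.Injective (fun z => y ◃ z) := (Rack.act' y).injective
        obtain ⟨l', h1, h2, h3⟩ := ih (t.map (fun z => y ◃ z)) (by simpa using hl)
        have hcnt : (t.map (fun z => y ◃ z)).count y = t.count y := by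
          have h0 := List.count_map_of_injective t (fun z => y ◃ z) hinj y
          simpa using h0
        refine ⟨l', ?_, ?_, h3⟩
        · rw [qdlProd_cons, qdl_push hρ, h1, hcnt, List.count_cons_self, mul_assoc, ← pow_succ]
        · simp only [List.count_cons_self, List.length_cons]
          rw [hcnt] at h2
          simp only [List.length_map] at h2
          omega
      · obtain ⟨l', h1, h2, h3⟩ := ih t hl
        have hcnt : (y :: t).count x = t.count x := List.count_cons_of_ne hxy
        refine ⟨y :: l', ?_, ?_, ?_⟩
        · rw [qdlProd_cons, h1, hcnt, qdlProd_cons, mul_assoc]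
        · simp only [List.length_cons, hcnt]; omega
        · simp only [List.mem_cons, not_or]; exact ⟨fun h => hxy h.symm, h3⟩


end QdlAux


lemma qdl_endgame {A : Type*} [CommRing A] [Nontrivial A] [Algebra ℂ A]
    (hft : Algebra.FiniteType ℂ A)
    {V : Type*} [AddCommGroup V] [Module ℂ V] [Module A V] [IsScalarTower ℂ A V]
    [Module.Finite A V]
    (hfaith : ∀ a : A, (∀ w : V, a • w = 0) → a = 0)
    (hbt : ∀ I : Ideal A, I • (⊤ : Submodule A V) = ⊥ ∨ I • (⊤ : Submodule A V) = ⊤) :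
    Module.Finite ℂ V := by
  obtain ⟨𝔪, hmax⟩ := Ideal.exists_maximal A
  have hm_bot : 𝔪 = ⊥ := by
    rcases hbt 𝔪 with h | h
    · rw [eq_bot_iff]
      intro c hc
      refine hfaith c (fun w => ?_)
      have hm : c • w ∈ 𝔪 • (⊤ : Submodule A V) :=
        Submodule.smul_mem_smul hc Submodule.mem_top
      rw [h] at hm
      simpa using hm
    · exfalso
      have hfg : (⊤ : Submodule A V).FG := Module.finite_def.mp ‹_›
      obtain ⟨r, hr1, hr0⟩ :=
        Submodule.exists_sub_one_mem_and_smul_eq_zero_of_fg_of_le_smul 𝔪 ⊤ hfg (by rw [h])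
      have hr : r = 0 := hfaith r (fun w => hr0 w Submodule.mem_top)
      rw [hr, zero_sub] at hr1
      have h1 : (1 : A) ∈ 𝔪 := by simpa using 𝔪.neg_mem hr1
      exact hmax.ne_top (Ideal.eq_top_of_isUnit_mem _ h1 isUnit_one)
  have hfield : IsField A := by
    by_contra hnf
    exact Ring.ne_bot_of_isMaximal_of_not_isField hmax hnf hm_bot
  letI := hfield.toField
  haveI := hft
  haveI : Module.Finite ℂ A := finite_of_finite_type_of_isJacobsonRing ℂ A
  exact Module.Finite.trans A V

/-- every irreducible representation over `ℂ` of a finite quandle is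
finite dimensional. -/
theorem stmt2 (Q : Type*) [Quandle Q] [Finite Q] (V : Type*) [AddCommGroup V] [Module ℂ V]
    (ρ : Q → (V →ₗ[ℂ] V)ˣ) (hρ : IsQdlRep ρ) (hirr : QdlIrred ρ) :
    FiniteDimensional ℂ V := by
  classical
  by_cases hV : ∀ w : V, w = 0
  · exact ⟨⟨∅, eq_top_iff.mpr (fun w _ => by rw [hV w]; exact Submodule.zero_mem _)⟩⟩
  push_neg at hV
  obtain ⟨v, hv⟩ := hV
  haveI : Nontrivial V := ⟨⟨v, 0, hv⟩⟩
  letI : Fintype Q := Fintype.ofFinite Q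
  set m : ℕ := Nat.card (Equiv.Perm Q) with hmdef
  have hm0 : 0 < m := Nat.card_pos
  set S : Set (Module.End ℂ V) :=
    Set.range (fun x : Q => (((ρ x : V →ₗ[ℂ] V)) ^ m)) with hSdef
  -- commutation of generators
  have hcomm_units : ∀ x y : Q, Commute ((ρ x) ^ m) (ρ y) := fun x y => qdl_central hρ x y
  have hScomm : ∀ a ∈ S, ∀ b ∈ S, a * b = b * a := by
    rintro _ ⟨x, rfl⟩ _ ⟨y, rfl⟩
    have h1 : Commute ((ρ x) ^ m) ((ρ y) ^ m) := (hcomm_units x y).pow_right m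
    have h2 := congrArg Units.val h1
    simpa [Units.val_mul] using h2
  letI instCR : CommRing ↥(Algebra.adjoin ℂ S) := Algebra.adjoinCommRingOfComm ℂ hScomm
  letI instMod : Module ↥(Algebra.adjoin ℂ S) V :=
    Module.compHom V ((Algebra.adjoin ℂ S).val.toRingHom)
  letI instSMulCV : SMul ↥(Algebra.adjoin ℂ S) V := instMod.toSMul
  have hsm : ∀ (c : ↥(Algebra.adjoin ℂ S)) (w : V), c • w = (c : Module.End ℂ V) w :=
    fun _ _ => rfl
  letI instTower : IsScalarTower ℂ ↥(Algebra.adjoin ℂ S) V := by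
    constructor
    intro a c w
    rw [hsm, hsm]
    have : ((a • c : ↥(Algebra.adjoin ℂ S)) : Module.End ℂ V) = a • (c : Module.End ℂ V) := rfl
    rw [this, LinearMap.smul_apply]
  -- commutation of all elements of C with each ρ x
  have hCcomm : ∀ (x : Q) (c : Module.End ℂ V), c ∈ Algebra.adjoin ℂ S →
      c * ((ρ x : V →ₗ[ℂ] V)) = ((ρ x : V →ₗ[ℂ] V)) * c := by
    intro x c hc
    induction hc using Algebra.adjoin_induction with
    | mem a ha =>
      obtain ⟨y, rfl⟩ := ha
      have h1 : Commute ((ρ y) ^ m) (ρ x) := hcomm_units y x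
      have h2 := congrArg Units.val h1
      simpa [Units.val_mul] using h2
    | algebraMap r => exact Algebra.commutes r _
    | add a b ha hb iha ihb => rw [add_mul, mul_add, iha, ihb]
    | mul a b ha hb iha ihb => rw [mul_assoc, ihb, ← mul_assoc, iha, mul_assoc]
  -- promoting C-submodules to ℂ-submodules
  have toC : ∀ N : Submodule ↥(Algebra.adjoin ℂ S) V,
      ∃ W : Submodule ℂ V, (W : Set V) = (N : Set V) := by
    intro N
    refine ⟨{ carrier := (N : Set V)
              add_mem' := fun ha hb => N.add_mem ha hb
              zero_mem' := N.zero_mem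
              smul_mem' := fun a w hw => ?_ }, rfl⟩
    have h1 : a • w = (algebraMap ℂ ↥(Algebra.adjoin ℂ S) a) • w := (algebraMap_smul _ a w).symm
    rw [h1]
    exact N.smul_mem _ hw
  -- the span
  set L : ℕ := Fintype.card Q * (m - 1) with hLdef
  set Gs : Set V :=
    (fun l : List Q => ((qdlProd ρ l : (V →ₗ[ℂ] V)ˣ) : V →ₗ[ℂ] V) v) '' {l | l.length ≤ L}
    with hGdef
  have hGfin : Gs.Finite := (List.finite_length_le Q L).image _
  set T : Submodule ↥(Algebra.adjoin ℂ S) V := Submodule.span ↥(Algebra.adjoin ℂ S) Gs with hTdef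
  have hmemC : ∀ x : Q, ((ρ x : V →ₗ[ℂ] V) ^ m) ∈ Algebra.adjoin ℂ S :=
    fun x => Algebra.subset_adjoin ⟨x, rfl⟩
  have key : ∀ n (l : List Q), l.length = n → ((qdlProd ρ l : (V →ₗ[ℂ] V)ˣ) : V →ₗ[ℂ] V) v ∈ T := by
    intro n
    induction n using Nat.strong_induction_on with
    | _ n ih =>
      intro l hln
      by_cases hlen : l.length ≤ L
      · exact Submodule.subset_span ⟨l, hlen, rfl⟩
      · push_neg at hlen
        have hx : ∃ x : Q, m ≤ l.count x := by
          by_contra hcn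
          push_neg at hcn
          have h1 : ∑ a ∈ (l : Multiset Q).toFinset, (l : Multiset Q).count a
              = Multiset.card (l : Multiset Q) := Multiset.toFinset_sum_count_eq _
          have h2 : ∑ a ∈ (l : Multiset Q).toFinset, (l : Multiset Q).count a
              ≤ (l : Multiset Q).toFinset.card * (m - 1) := by
            calc ∑ a ∈ (l : Multiset Q).toFinset, (l : Multiset Q).count a
                ≤ ∑ _a ∈ (l : Multiset Q).toFinset, (m - 1) := by
                  refine Finset.sum_le_sum (fun a _ => ?_)
                  have := hcn a
                  rw [Multiset.coe_count]
                  omega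
              _ = (l : Multiset Q).toFinset.card * (m - 1) := by
                  rw [Finset.sum_const, smul_eq_mul]
          have h3 : (l : Multiset Q).toFinset.card ≤ Fintype.card Q := Finset.card_le_univ _
          have h4 : Multiset.card (l : Multiset Q) = l.length := rfl
          have : l.length ≤ L := by
            rw [hLdef]
            calc l.length = ∑ a ∈ (l : Multiset Q).toFinset, (l : Multiset Q).count a := by
                  rw [h1, h4]
              _ ≤ (l : Multiset Q).toFinset.card * (m - 1) := h2
              _ ≤ Fintype.card Q * (m - 1) := Nat.mul_le_mul_right _ h3
          omega
        obtain ⟨x, hxm⟩ := hx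
        obtain ⟨l', h1, h2, _h3⟩ := qdl_gather hρ x l.length l le_rfl
        have hsplit : (ρ x) ^ (l.count x) = (ρ x) ^ m * (ρ x) ^ (l.count x - m) := by
          rw [← pow_add, Nat.add_sub_cancel' hxm]
        have hcm : Commute ((ρ x) ^ m) (qdlProd ρ l') :=
          qdl_commute_prod (fun y => hcomm_units x y) l'
        have heq : qdlProd ρ l
            = (ρ x) ^ m * qdlProd ρ (l' ++ List.replicate (l.count x - m) x) := by
          rw [qdlProd_append, qdlProd_replicate, h1, hsplit, ← mul_assoc, ← mul_assoc,
            hcm.eq]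
        have hlt : (l' ++ List.replicate (l.count x - m) x).length < n := by
          rw [List.length_append, List.length_replicate]
          omega
        have hrec := ih _ hlt _ rfl
        have hfinal : ((qdlProd ρ l : (V →ₗ[ℂ] V)ˣ) : V →ₗ[ℂ] V) v
            = (⟨(ρ x : V →ₗ[ℂ] V) ^ m, hmemC x⟩ : ↥(Algebra.adjoin ℂ S)) •
              (((qdlProd ρ (l' ++ List.replicate (l.count x - m) x) : (V →ₗ[ℂ] V)ˣ) :
                V →ₗ[ℂ] V) v) := by
          rw [hsm, heq]
          simp [Units.val_mul, Module.End.mul_apply]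
        rw [hfinal]
        exact T.smul_mem _ hrec
  -- invariance of C-submodules built from ρ-stable generators
  have hmul_smul : ∀ (x : Q) (c : ↥(Algebra.adjoin ℂ S)) (w : V),
      ((ρ x : V →ₗ[ℂ] V)) (c • w) = c • (((ρ x : V →ₗ[ℂ] V)) w) := by
    intro x c w
    rw [hsm, hsm]
    have := hCcomm x (c : Module.End ℂ V) c.2
    calc ((ρ x : V →ₗ[ℂ] V)) ((c : Module.End ℂ V) w)
        = (((ρ x : V →ₗ[ℂ] V)) * (c : Module.End ℂ V)) w := rfl
      _ = ((c : Module.End ℂ V) * ((ρ x : V →ₗ[ℂ] V))) w := by rw [this]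
      _ = (c : Module.End ℂ V) (((ρ x : V →ₗ[ℂ] V)) w) := rfl
  have hTinv : ∀ x : Q, ∀ w ∈ T, ((ρ x : V →ₗ[ℂ] V)) w ∈ T := by
    intro x w hw
    induction hw using Submodule.span_induction with
    | mem w hwmem =>
      obtain ⟨l, _hl, rfl⟩ := hwmem
      have h1 : ((ρ x : V →ₗ[ℂ] V)) (((qdlProd ρ l : (V →ₗ[ℂ] V)ˣ) : V →ₗ[ℂ] V) v)
          = ((qdlProd ρ (x :: l) : (V →ₗ[ℂ] V)ˣ) : V →ₗ[ℂ] V) v := by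
        rw [qdlProd_cons]
        simp [Units.val_mul, Module.End.mul_apply]
      rw [h1]
      exact key _ _ rfl
    | zero => simpa using T.zero_mem
    | add a b _ _ iha ihb => rw [map_add]; exact T.add_mem iha ihb
    | smul c w _ ihw => rw [hmul_smul]; exact T.smul_mem c ihw
  -- T = ⊤
  obtain ⟨W, hWcar⟩ := toC T
  have hWinv : ∀ x : Q, ∀ u ∈ W, ((ρ x : V →ₗ[ℂ] V)) u ∈ W := by
    intro x u hu
    have hu' : u ∈ T := by rw [← SetLike.mem_coe, hWcar] at hu; exact hu
    have := hTinv x u hu'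
    rw [← SetLike.mem_coe, hWcar]
    exact this
  have hvW : v ∈ W := by
    rw [← SetLike.mem_coe, hWcar]
    have : ((qdlProd ρ ([] : List Q) : (V →ₗ[ℂ] V)ˣ) : V →ₗ[ℂ] V) v ∈ T := key 0 [] rfl
    simpa [qdlProd_nil] using this
  have hWtop : W = ⊤ := by
    rcases hirr W hWinv with h | h
    · exfalso; rw [h] at hvW; exact hv (by simpa using hvW)
    · exact h
  have hTtop : T = ⊤ := by
    rw [Submodule.eq_top_iff']
    intro w
    rw [← SetLike.mem_coe, ← hWcar, hWtop]
    trivial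
  haveI hfinCV : Module.Finite ↥(Algebra.adjoin ℂ S) V :=
    ⟨hTtop ▸ Submodule.fg_span hGfin⟩
  -- nontriviality of C
  haveI : Nontrivial ↥(Algebra.adjoin ℂ S) := by
    refine nontrivial_of_ne 0 1 (fun h => ?_)
    have h2 := congrArg (fun c : ↥(Algebra.adjoin ℂ S) => (c : Module.End ℂ V) v) h
    simp only [ZeroMemClass.coe_zero, OneMemClass.coe_one, LinearMap.zero_apply,
      Module.End.one_apply] at h2
    exact hv h2.symm
  -- finite type
  have hft : Algebra.FiniteType ℂ ↥(Algebra.adjoin ℂ S) := by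
    have hSfin : S.Finite := Set.finite_range _
    have hfg : (Algebra.adjoin ℂ S).FG := by
      have := Subalgebra.fg_adjoin_finset (R := ℂ) hSfin.toFinset
      rwa [Set.Finite.coe_toFinset] at this
    exact (Subalgebra.fg_iff_finiteType _).mp hfg
  -- faithfulness
  have hfaith : ∀ a : ↥(Algebra.adjoin ℂ S), (∀ w : V, a • w = 0) → a = 0 := by
    intro a ha
    apply Subtype.ext
    apply LinearMap.ext
    intro w
    have := ha w
    rw [hsm] at this
    simpa using this
  -- bot or top for ideal multiples
  have hbt : ∀ I : Ideal ↥(Algebra.adjoin ℂ S),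
      I • (⊤ : Submodule ↥(Algebra.adjoin ℂ S) V) = ⊥ ∨
      I • (⊤ : Submodule ↥(Algebra.adjoin ℂ S) V) = ⊤ := by
    intro I
    haveI : IsScalarTower ↥(Algebra.adjoin ℂ S) ↥(Algebra.adjoin ℂ S) V := ⟨fun _ _ _ => rfl⟩
    set N : Submodule ↥(Algebra.adjoin ℂ S) V := I • ⊤ with hNdef
    have hNinv : ∀ x : Q, ∀ w ∈ N, ((ρ x : V →ₗ[ℂ] V)) w ∈ N := by
      intro x w hw
      refine Submodule.smul_induction_on hw ?_ ?_
      · intro c hc u _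
        rw [hmul_smul]
        exact Submodule.smul_mem_smul hc Submodule.mem_top
      · intro a b ha hb
        rw [map_add]
        exact N.add_mem ha hb
    obtain ⟨WN, hWNcar⟩ := toC N
    have hWNinv : ∀ x : Q, ∀ u ∈ WN, ((ρ x : V →ₗ[ℂ] V)) u ∈ WN := by
      intro x u hu
      have hu' : u ∈ N := by rw [← SetLike.mem_coe, hWNcar] at hu; exact hu
      have := hNinv x u hu'
      rw [← SetLike.mem_coe, hWNcar]
      exact this
    rcases hirr WN hWNinv with h | h
    · left
      rw [eq_bot_iff]
      intro w hw
      have : w ∈ WN := by rw [← SetLike.mem_coe, hWNcar]; exact hw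
      rw [h] at this
      simpa using this
    · right
      rw [Submodule.eq_top_iff']
      intro w
      have : w ∈ WN := by rw [h]; trivial
      rw [← SetLike.mem_coe, hWNcar] at this
      exact this
  exact qdl_endgame hft hfaith hbt
end

section
/- For every quandle Q, the kernel Z₀ of the group morphism θ_{G(Q)} : G(Q) → Inn(Q) is contained in the center of G(Q). -/
open scoped Quandles
lemma qdl_conj_incl {Q : Type*} [Rack Q] (g : Rack.EnvelGroup Q) :
    ∀ x : Q, g * Rack.toEnvelGroup Q x * g⁻¹ =
      Rack.toEnvelGroup Q (((QdlThetaG Q g : Equiv.Perm Q)) x) := by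
  induction g using Quotient.inductionOn with
  | h a =>
    induction a with
    | unit =>
      intro x
      have h1 : Quotient.mk (Rack.PreEnvelGroup.setoid Q) Rack.PreEnvelGroup.unit
          = (1 : Rack.EnvelGroup Q) := rfl
      simp [h1]
    | incl y =>
      intro x
      have h1 : (Quotient.mk _ (Rack.PreEnvelGroup.incl y) : Rack.EnvelGroup Q) =
          Rack.toEnvelGroup Q y := rfl
      have h2 : QdlThetaG Q (Rack.toEnvelGroup Q y) = QdlTheta Q y := rfl
      rw [h1, h2]
      have := (Rack.toEnvelGroup Q).map_act' (x := y) (y := x)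
      rw [Quandle.conj_act_eq_conj] at this
      have h3 : ((QdlTheta Q y : QdlInn Q) : Equiv.Perm Q) x = y ◃ x := rfl
      rw [h3]
      exact this.symm
    | mul a b iha ihb =>
      intro x
      set A : Rack.EnvelGroup Q := Quotient.mk _ a with hA
      set B : Rack.EnvelGroup Q := Quotient.mk _ b with hB
      have hm : (Quotient.mk _ (a.mul b) : Rack.EnvelGroup Q) = A * B := rfl
      rw [hm, mul_inv_rev,
        show A * B * Rack.toEnvelGroup Q x * (B⁻¹ * A⁻¹) =
          A * (B * Rack.toEnvelGroup Q x * B⁻¹) * A⁻¹ by group,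
        ihb, iha, map_mul]
      rfl
    | inv a iha =>
      intro x
      set A : Rack.EnvelGroup Q := Quotient.mk _ a with hA
      have hm : (Quotient.mk _ a.inv : Rack.EnvelGroup Q) = A⁻¹ := rfl
      rw [hm]
      have h := iha (((QdlThetaG Q A : Equiv.Perm Q))⁻¹ x)
      rw [← Equiv.Perm.mul_apply, mul_inv_cancel, Equiv.Perm.one_apply] at h
      have : Rack.toEnvelGroup Q ((QdlThetaG Q A : Equiv.Perm Q)⁻¹ x) =
          A⁻¹ * Rack.toEnvelGroup Q x * A := by
        rw [← h]; group
      rw [inv_inv, ← this]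
      congr 1

lemma qdl_comm_incl {Q : Type*} [Rack Q] (g : Rack.EnvelGroup Q)
    (hg : g ∈ QdlZ0 Q) (x : Q) :
    g * Rack.toEnvelGroup Q x = Rack.toEnvelGroup Q x * g := by
  have h := qdl_conj_incl g x
  have hg' : QdlThetaG Q g = 1 := hg
  rw [hg'] at h
  have h1 : ((1 : QdlInn Q) : Equiv.Perm Q) x = x := rfl
  rw [h1] at h
  have := congrArg (· * g) h
  simpa [mul_assoc] using this


/-- the kernel `Z₀` of `θ_{G(Q)} : G(Q) → Inn(Q)` is contained in the
center of `G(Q)`. -/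
theorem stmt3 (Q : Type*) [Quandle Q] :
    QdlZ0 Q ≤ Subgroup.center (Rack.EnvelGroup Q) := by
  intro g hg
  rw [Subgroup.mem_center_iff]
  intro h
  induction h using Quotient.inductionOn with
  | h a =>
    induction a with
    | unit =>
      have h1 : Quotient.mk (Rack.PreEnvelGroup.setoid Q) Rack.PreEnvelGroup.unit
          = (1 : Rack.EnvelGroup Q) := rfl
      rw [h1, one_mul, mul_one]
    | incl y =>
      exact (qdl_comm_incl g hg y).symm
    | mul a b iha ihb =>
      set A : Rack.EnvelGroup Q := Quotient.mk _ a
      set B : Rack.EnvelGroup Q := Quotient.mk _ b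
      have hm : Quotient.mk (Rack.PreEnvelGroup.setoid Q) (a.mul b) = A * B := rfl
      rw [hm, mul_assoc, ihb, ← mul_assoc, iha, mul_assoc]
    | inv a iha =>
      set A : Rack.EnvelGroup Q := Quotient.mk _ a
      have hm : Quotient.mk (Rack.PreEnvelGroup.setoid Q) a.inv = A⁻¹ := rfl
      rw [hm]
      have : A * (g * A⁻¹) = (g * A⁻¹) * A := by
        rw [← mul_assoc, iha, mul_assoc, mul_inv_cancel, mul_one, mul_assoc,
          inv_mul_cancel, mul_one]
      calc A⁻¹ * g = A⁻¹ * (g * A⁻¹ * A) := by rw [inv_mul_cancel_right]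
        _ = A⁻¹ * (A * (g * A⁻¹)) := by rw [this]
        _ = g * A⁻¹ := by rw [← mul_assoc, inv_mul_cancel, one_mul]
end

section
/- For every group G, with Q = Conj(G), the canonical quandle morphism φ_Q : Conj(G) → G(Q) is injective, and the kernel Z₀ of θ_{G(Q)} : G(Q) → Inn(Q) is equal to the center of G(Q). -/
open scoped Quandles
section Stmt4Aux

open scoped Quandles

private def emkAux {Q : Type*} [Rack Q] : Rack.PreEnvelGroup Q → Rack.EnvelGroup Q :=
  Quotient.mk (Rack.PreEnvelGroup.setoid Q)

private lemma emkAux_mul {Q : Type*} [Rack Q] (a b : Rack.PreEnvelGroup Q) :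
    emkAux (a.mul b) = emkAux a * emkAux b := rfl

private lemma emkAux_inv {Q : Type*} [Rack Q] (a : Rack.PreEnvelGroup Q) :
    emkAux a.inv = (emkAux a)⁻¹ := rfl

private lemma emkAux_unit {Q : Type*} [Rack Q] :
    emkAux (Rack.PreEnvelGroup.unit : Rack.PreEnvelGroup Q) = 1 := rfl

private lemma emkAux_incl {Q : Type*} [Rack Q] (y : Q) :
    emkAux (Rack.PreEnvelGroup.incl y) = Rack.toEnvelGroup Q y := rfl

private lemma conj_aux {Q : Type*} [Rack Q] (a : Rack.PreEnvelGroup Q) :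
    ∀ x : Q, emkAux a * Rack.toEnvelGroup Q x * (emkAux a)⁻¹ =
      Rack.toEnvelGroup Q (Rack.envelAction (emkAux a) x) := by
  induction a with
  | unit => intro x; simp [emkAux_unit]
  | incl y =>
    intro x
    rw [emkAux_incl, Rack.envelAction_prop, ShelfHom.map_act, Quandle.conj_act_eq_conj]
  | mul a b iha ihb =>
    intro x
    rw [emkAux_mul, map_mul, mul_inv_rev,
      show emkAux a * emkAux b * Rack.toEnvelGroup Q x * ((emkAux b)⁻¹ * (emkAux a)⁻¹)
        = emkAux a * (emkAux b * Rack.toEnvelGroup Q x * (emkAux b)⁻¹) * (emkAux a)⁻¹ by group,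
      ihb, iha]
    rfl
  | inv a iha =>
    intro x
    rw [emkAux_inv, map_inv]
    have := iha ((Rack.envelAction (emkAux a))⁻¹ x)
    rw [show ∀ (f : Equiv.Perm Q) (y : Q), f (f⁻¹ y) = y from fun f y => f.apply_symm_apply y] at this
    rw [← this]
    group

private lemma conj_envel {Q : Type*} [Rack Q] (g : Rack.EnvelGroup Q) (x : Q) :
    g * Rack.toEnvelGroup Q x * g⁻¹ =
      Rack.toEnvelGroup Q (Rack.envelAction g x) :=
  Quotient.inductionOn g (fun a => conj_aux a x)

private lemma commute_aux {Q : Type*} [Rack Q] (g : Rack.EnvelGroup Q)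
    (hg : ∀ x : Q, Commute g (Rack.toEnvelGroup Q x)) (h : Rack.EnvelGroup Q) :
    Commute g h := by
  induction h using Quotient.inductionOn with
  | h a =>
    show Commute g (emkAux a)
    induction a with
    | unit => rw [emkAux_unit]; exact Commute.one_right g
    | incl y => rw [emkAux_incl]; exact hg y
    | mul a b iha ihb => rw [emkAux_mul]; exact Commute.mul_right iha ihb
    | inv a iha => rw [emkAux_inv]; exact Commute.inv_right iha

end Stmt4Aux

section Stmt4Theta

private lemma theta_subtype (Q : Type*) [Rack Q] :
    ((QdlInn Q).subtype).comp (QdlThetaG Q) = Rack.envelAction := by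
  have h := Rack.toEnvelGroup.univ_uniq Q (Q ≃ Q) (Rack.toConj Q)
      (((QdlInn Q).subtype).comp (QdlThetaG Q)) (DFunLike.ext _ _ fun x => rfl)
  rw [h]; rfl

private lemma theta_coe {Q : Type*} [Rack Q] (g : Rack.EnvelGroup Q) :
    ((QdlThetaG Q g : QdlInn Q) : Equiv.Perm Q) = Rack.envelAction g :=
  congrArg (fun f => DFunLike.coe f g) (theta_subtype Q)

private lemma mem_Z0_iff {Q : Type*} [Rack Q] (g : Rack.EnvelGroup Q) :
    g ∈ QdlZ0 Q ↔ Rack.envelAction g = 1 := by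
  rw [QdlZ0, MonoidHom.mem_ker, ← theta_coe]
  constructor
  · intro h; rw [h]; rfl
  · intro h; exact Subtype.ext h

end Stmt4Theta

/-- for `Q = Conj(G)`, the canonical map `φ_Q : Conj(G) → G(Q)` is injective
and `Z₀ = ker θ_{G(Q)}` equals the center of `G(Q)`. -/
theorem stmt4 (G : Type*) [Group G] :
    Function.Injective (Rack.toEnvelGroup (Quandle.Conj G)) ∧
      QdlZ0 (Quandle.Conj G) = Subgroup.center (Rack.EnvelGroup (Quandle.Conj G)) := by
  classical
  have hinj : Function.Injective (Rack.toEnvelGroup (Quandle.Conj G)) := by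
    have hret : ∀ x : Quandle.Conj G,
        Rack.toEnvelGroup.map (ShelfHom.id (Quandle.Conj G))
          (Rack.toEnvelGroup (Quandle.Conj G) x) = x := fun _ => rfl
    intro a b h
    have := congrArg (Rack.toEnvelGroup.map (ShelfHom.id (Quandle.Conj G))) h
    rwa [hret, hret] at this
  refine ⟨hinj, ?_⟩
  ext g
  rw [mem_Z0_iff, Subgroup.mem_center_iff]
  constructor
  · intro he h
    have hg : ∀ x : Quandle.Conj G,
        Commute g (Rack.toEnvelGroup (Quandle.Conj G) x) := by
      intro x
      have hc := conj_envel g x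
      rw [he] at hc
      have : g * Rack.toEnvelGroup (Quandle.Conj G) x * g⁻¹
          = Rack.toEnvelGroup (Quandle.Conj G) x := hc
      exact mul_inv_eq_iff_eq_mul.mp this
    exact (commute_aux g hg h).symm.eq
  · intro hc
    have hfix : ∀ x : Quandle.Conj G, Rack.envelAction g x = x := by
      intro x
      apply hinj
      have := conj_envel g x
      rw [← this, ← hc (Rack.toEnvelGroup (Quandle.Conj G) x)]
      group
    exact Equiv.ext hfix
end

section
/- Let Q be a finite quandle, ρ : Q → GL(V) an irreducible representation of Q over ℂ, and ρ_{G(Q)} : G(Q) → GL(V) the induced group representation. If g, h ∈ G(Q) satisfy θ_{G(Q)}(g) = θ_{G(Q)}(h), then there exists c ∈ ℂˣ with ρ_{G(Q)}(g) = c · ρ_{G(Q)}(h). -/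
open scoped Quandles
/-! ### Auxiliary lemmas -/

private def mkE {Q : Type*} [Rack Q] : Rack.PreEnvelGroup Q → Rack.EnvelGroup Q :=
  Quotient.mk _

private lemma qdlThetaG_incl {Q : Type*} [Rack Q] (x : Q) :
    QdlThetaG Q (Rack.toEnvelGroup Q x) = QdlTheta Q x := rfl

private lemma envel_conj_aux {Q : Type*} [Rack Q] (e : Rack.PreEnvelGroup Q) (y : Q) :
    mkE e * Rack.toEnvelGroup Q y * (mkE e)⁻¹
      = Rack.toEnvelGroup Q (((QdlThetaG Q (mkE e) : Equiv.Perm Q)) y) := by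
  induction e generalizing y with
  | unit =>
    have h1 : mkE (Q := Q) .unit = 1 := rfl
    simp [h1]
  | incl x =>
    have h1 : mkE (Q := Q) (.incl x) = Rack.toEnvelGroup Q x := rfl
    have h3 : (QdlThetaG Q (Rack.toEnvelGroup Q x) : Equiv.Perm Q) y = x ◃ y := rfl
    rw [h1, h3]
    have h2 := (Rack.toEnvelGroup Q).map_act' (x := x) (y := y)
    rw [Quandle.conj_act_eq_conj] at h2
    exact h2.symm
  | mul a b iha ihb =>
    have h1 : mkE (a.mul b) = mkE a * mkE b := rfl
    rw [h1]
    have h2 : mkE a * mkE b * Rack.toEnvelGroup Q y * (mkE a * mkE b)⁻¹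
        = mkE a * (mkE b * Rack.toEnvelGroup Q y * (mkE b)⁻¹) * (mkE a)⁻¹ := by group
    rw [h2, ihb, iha]
    congr 1
  | inv a ih =>
    have h1 : mkE a.inv = (mkE a)⁻¹ := rfl
    rw [h1]
    set p : Equiv.Perm Q := (QdlThetaG Q (mkE a) : Equiv.Perm Q) with hp
    have h2 := ih (p⁻¹ y)
    have h3 : p (p⁻¹ y) = y := Equiv.apply_symm_apply p y
    rw [h3] at h2
    have h4 : ((QdlThetaG Q ((mkE a)⁻¹) : Equiv.Perm Q)) y = p⁻¹ y := by
      rw [map_inv]; rfl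
    rw [h4, ← h2]
    group

private lemma envel_conj {Q : Type*} [Rack Q] (g : Rack.EnvelGroup Q) (y : Q) :
    g * Rack.toEnvelGroup Q y * g⁻¹
      = Rack.toEnvelGroup Q (((QdlThetaG Q g : Equiv.Perm Q)) y) :=
  Quotient.inductionOn g (fun e => envel_conj_aux e y)


open Polynomial Cardinal in
private lemma dixmier {Q : Type*} {V : Type*} [AddCommGroup V] [Module ℂ V]
    [Finite Q] (ρ : Q → (V →ₗ[ℂ] V)ˣ) (hirr : QdlIrred ρ)
    (T : (V →ₗ[ℂ] V)ˣ)
    (hcomm : ∀ (x : Q) (u : V), (T : V →ₗ[ℂ] V) ((ρ x : V →ₗ[ℂ] V) u)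
      = (ρ x : V →ₗ[ℂ] V) ((T : V →ₗ[ℂ] V) u)) :
    ∃ c : ℂˣ, ∀ u : V, (T : V →ₗ[ℂ] V) u = (c : ℂ) • u := by
  classical
  rcases subsingleton_or_nontrivial V with hV | hV
  · exact ⟨1, fun u => Subsingleton.elim _ _⟩
  set T' : Module.End ℂ V := (T : V →ₗ[ℂ] V) with hT'
  by_cases hev : ∃ c : ℂ, ∃ v : V, v ≠ 0 ∧ T' v = c • v
  · obtain ⟨c, v, hv0, hvc⟩ := hev
    set W := LinearMap.ker (T' - algebraMap ℂ (Module.End ℂ V) c) with hW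
    have hmem : ∀ u : V, u ∈ W ↔ T' u = c • u := by
      intro u
      simp [hW, LinearMap.mem_ker, LinearMap.sub_apply, sub_eq_zero,
        Module.algebraMap_end_apply]
    have hWinv : ∀ x : Q, ∀ w ∈ W, (ρ x : V →ₗ[ℂ] V) w ∈ W := by
      intro x w hw
      rw [hmem] at hw ⊢
      rw [hcomm, hw, map_smul]
    rcases hirr W hWinv with hbot | htop
    · have hvW : v ∈ W := (hmem v).2 hvc
      rw [hbot] at hvW
      exact absurd ((Submodule.mem_bot ℂ).1 hvW) hv0
    · have hall : ∀ u : V, T' u = c • u := fun u =>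
        (hmem u).1 (htop ▸ Submodule.mem_top)
      have hc : c ≠ 0 := by
        intro hc0
        apply hv0
        have h2 : ((T⁻¹ : (V →ₗ[ℂ] V)ˣ) : V →ₗ[ℂ] V) (T' v) = v := by
          rw [← Module.End.mul_apply, ← Units.val_mul, inv_mul_cancel T, Units.val_one,
            Module.End.one_apply]
        rw [hvc, hc0, zero_smul, map_zero] at h2
        exact h2.symm
      exact ⟨Units.mk0 c hc, hall⟩
  · exfalso
    push_neg at hev
    -- every T' - c is bijective
    have hsubc : ∀ (c : ℂ) (x : Q) (u : V),
        (T' - algebraMap ℂ (Module.End ℂ V) c) ((ρ x : V →ₗ[ℂ] V) u)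
          = (ρ x : V →ₗ[ℂ] V) ((T' - algebraMap ℂ (Module.End ℂ V) c) u) := by
      intro c x u
      simp only [LinearMap.sub_apply, Module.algebraMap_end_apply, hcomm, map_sub, map_smul]
    have hU : ∀ c : ℂ, IsUnit (T' - algebraMap ℂ (Module.End ℂ V) c) := by
      intro c
      rw [Module.End.isUnit_iff]
      constructor
      · rw [← LinearMap.ker_eq_bot]
        rcases hirr (LinearMap.ker (T' - algebraMap ℂ (Module.End ℂ V) c)) (by
          intro x w hw
          rw [LinearMap.mem_ker] at hw ⊢
          rw [hsubc, hw, map_zero]) with hbot | htop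
        · exact hbot
        · exfalso
          obtain ⟨v, hv0⟩ := exists_ne (0 : V)
          have hker : v ∈ LinearMap.ker (T' - algebraMap ℂ (Module.End ℂ V) c) := by
            rw [htop]; trivial
          rw [LinearMap.mem_ker, LinearMap.sub_apply, Module.algebraMap_end_apply,
            sub_eq_zero] at hker
          exact hev c v hv0 hker
      · rw [← LinearMap.range_eq_top]
        rcases hirr (LinearMap.range (T' - algebraMap ℂ (Module.End ℂ V) c)) (by
          intro x w hw
          rw [LinearMap.mem_range] at hw ⊢
          obtain ⟨u, hu⟩ := hw
          exact ⟨(ρ x : V →ₗ[ℂ] V) u, by rw [hsubc, hu]⟩) with hbot | htop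
        · exfalso
          obtain ⟨v, hv0⟩ := exists_ne (0 : V)
          have h2 : (T' - algebraMap ℂ (Module.End ℂ V) c) v = 0 := by
            have := LinearMap.mem_range_self (T' - algebraMap ℂ (Module.End ℂ V) c) v
            rw [hbot] at this
            exact this
          rw [LinearMap.sub_apply, Module.algebraMap_end_apply, sub_eq_zero] at h2
          exact hev c v hv0 h2
        · exact htop
    obtain ⟨v, hv0⟩ := exists_ne (0 : V)
    -- rank bound via spanning by monomials
    have hrank : Module.rank ℂ V ≤ Cardinal.aleph0 := by
      set mono : List Q → V := fun l => ((l.map fun x => ((ρ x : V →ₗ[ℂ] V))).prod) v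
        with hmono
      set S : Set V := Set.range mono with hS
      have hSinv : ∀ x : Q, ∀ w ∈ Submodule.span ℂ S, (ρ x : V →ₗ[ℂ] V) w ∈ Submodule.span ℂ S := by
        intro x w hw
        induction hw using Submodule.span_induction with
        | mem u hu =>
          obtain ⟨l, hl⟩ := hu
          apply Submodule.subset_span
          exact ⟨x :: l, by rw [hmono]; simp only [List.map_cons, List.prod_cons,
            Module.End.mul_apply]; rw [← hl]⟩
        | zero => rw [map_zero]; exact Submodule.zero_mem _
        | add a b ha hb iha ihb => rw [map_add]; exact Submodule.add_mem _ iha ihb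
        | smul a u hu ihu => rw [map_smul]; exact Submodule.smul_mem _ _ ihu
      have hvS : v ∈ S := ⟨[], by simp [hmono]⟩
      have hspan : Submodule.span ℂ S = ⊤ := by
        rcases hirr _ hSinv with hbot | htop
        · have hvsp := Submodule.subset_span (R := ℂ) hvS
          rw [hbot] at hvsp
          exact absurd ((Submodule.mem_bot ℂ).1 hvsp) hv0
        · exact htop
      have h2 := Cardinal.mk_range_le_lift (f := mono)
      rw [← hS] at h2
      have h3 := h2.trans (Cardinal.lift_le.2 (Cardinal.mk_le_aleph0 (α := List Q)))
      rw [Cardinal.lift_aleph0] at h3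
      have hSle : #(↥S) ≤ Cardinal.aleph0 := Cardinal.lift_le_aleph0.1 h3
      calc Module.rank ℂ V = Module.rank ℂ (⊤ : Submodule ℂ V) := (rank_top ℂ V).symm
        _ = Module.rank ℂ (Submodule.span ℂ S) := by rw [hspan]
        _ ≤ #(↥S) := rank_span_le S
        _ ≤ Cardinal.aleph0 := hSle
    -- linearly independent family indexed by ℂ
    set w : ℂ → V := fun c => (((hU c).unit⁻¹ : (Module.End ℂ V)ˣ) : Module.End ℂ V) v with hwdef
    have hwspec : ∀ c : ℂ, (T' - algebraMap ℂ (Module.End ℂ V) c) (w c) = v := by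
      intro c
      conv_lhs => rw [← (hU c).unit_spec]
      rw [hwdef]
      rw [← Module.End.mul_apply, ← Units.val_mul]
      simp
    have haU : ∀ q : Polynomial ℂ, q ≠ 0 → IsUnit (Polynomial.aeval T' q) := by
      intro q hq
      have hq' : q = C q.leadingCoeff * (q.roots.map fun a => X - C a).prod :=
        (C_leadingCoeff_mul_prod_multiset_X_sub_C (splits_iff_card_roots.1 (IsAlgClosed.splits q))).symm
      rw [hq', map_mul]
      apply IsUnit.mul
      · rw [aeval_C]
        exact (isUnit_iff_ne_zero.2 (leadingCoeff_ne_zero.2 hq)).map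
          (algebraMap ℂ (Module.End ℂ V))
      · generalize q.roots = R0
        induction R0 using Multiset.induction_on with
        | empty => simpa using isUnit_one
        | cons r M ih =>
          rw [Multiset.map_cons, Multiset.prod_cons, map_mul]
          exact IsUnit.mul (by rw [map_sub, aeval_X, aeval_C]; exact hU r) ih
    have hind : LinearIndependent ℂ w := by
      rw [linearIndependent_iff']
      intro s m hm i hi
      by_contra hmi
      set p : Polynomial ℂ :=
        s.sum fun j => m j • ((s.erase j).prod fun k => X - C k) with hp
      have hp0 : p ≠ 0 := by
        intro h0
        have heval : Polynomial.eval i p = 0 := by rw [h0, eval_zero]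
        rw [hp, eval_finset_sum] at heval
        rw [Finset.sum_eq_single i] at heval
        · rw [smul_eq_C_mul, eval_mul, eval_C, eval_prod] at heval
          simp only [eval_sub, eval_X, eval_C] at heval
          rcases mul_eq_zero.1 heval with h1 | h1
          · exact hmi h1
          · obtain ⟨k, hk, hk0⟩ := Finset.prod_eq_zero_iff.1 h1
            exact absurd (sub_eq_zero.1 hk0).symm (Finset.ne_of_mem_erase hk)
        · intro j hj hji
          rw [smul_eq_C_mul, eval_mul, eval_prod]
          apply mul_eq_zero_of_right
          apply Finset.prod_eq_zero (Finset.mem_erase_of_ne_of_mem (Ne.symm hji) hi)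
          simp
        · intro his
          exact absurd hi his
      have key : (Polynomial.aeval T' p) v = 0 := by
        have h1 : ∀ j ∈ s, (Polynomial.aeval T' ((s.prod fun k => X - C k))) (w j)
            = (Polynomial.aeval T' ((s.erase j).prod fun k => X - C k)) v := by
          intro j hj
          rw [← Finset.prod_erase_mul s _ hj, map_mul, Module.End.mul_apply]
          congr 1
          rw [map_sub, aeval_X, aeval_C]
          exact hwspec j
        have h2 := congrArg (fun u => (Polynomial.aeval T' ((s.prod fun k => X - C k))) u) hm
        simp only [map_zero, map_sum, map_smul] at h2
        rw [hp, map_sum]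
        rw [LinearMap.sum_apply]
        rw [← h2]
        apply Finset.sum_congr rfl
        intro j hj
        rw [map_smul, LinearMap.smul_apply, h1 j hj]
      have hinj := ((Module.End.isUnit_iff _).1 (haU p hp0)).injective
      apply hv0
      apply hinj
      rw [key, map_zero]
    have h1 := hind.cardinal_lift_le_rank
    have h2 := h1.trans (Cardinal.lift_le.2 hrank)
    rw [Cardinal.lift_aleph0, Cardinal.lift_le_aleph0, mk_complex] at h2
    exact absurd h2 (not_le.2 Cardinal.aleph0_lt_continuum)

/-- for an irreducible representation `ρ` of a finite quandle `Q`, two elements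
of `G(Q)` with the same image in `Inn(Q)` act by proportional operators. -/
theorem stmt7 (Q : Type*) [Quandle Q] [Finite Q] (V : Type*) [AddCommGroup V] [Module ℂ V]
    (ρ : Q → (V →ₗ[ℂ] V)ˣ) (hρ : IsQdlRep ρ) (hirr : QdlIrred ρ)
    (ρG : Rack.EnvelGroup Q →* (V →ₗ[ℂ] V)ˣ)
    (hcomp : ∀ x : Q, ρG (Rack.toEnvelGroup Q x) = ρ x)
    (g h : Rack.EnvelGroup Q) (hgh : QdlThetaG Q g = QdlThetaG Q h) :
    ∃ c : ℂˣ, (ρG g : V →ₗ[ℂ] V) = (c : ℂ) • (ρG h : V →ₗ[ℂ] V) := by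
  set z := g * h⁻¹ with hz
  have hθz : QdlThetaG Q z = 1 := by
    rw [hz, map_mul, map_inv, hgh, mul_inv_cancel]
  have hzcomm : ∀ x : Q, z * Rack.toEnvelGroup Q x = Rack.toEnvelGroup Q x * z := by
    intro x
    have h1 := envel_conj z x
    rw [hθz] at h1
    simp only [OneMemClass.coe_one, Equiv.Perm.coe_one, id_eq] at h1
    calc z * Rack.toEnvelGroup Q x = (z * Rack.toEnvelGroup Q x * z⁻¹) * z := by group
      _ = Rack.toEnvelGroup Q x * z := by rw [h1]
  have hcommU : ∀ x : Q, (ρG z) * ρ x = ρ x * ρG z := fun x => by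
    rw [← hcomp x, ← map_mul, ← map_mul, hzcomm]
  have hcommE : ∀ (x : Q) (u : V),
      (ρG z : V →ₗ[ℂ] V) ((ρ x : V →ₗ[ℂ] V) u)
        = (ρ x : V →ₗ[ℂ] V) ((ρG z : V →ₗ[ℂ] V) u) := by
    intro x u
    have h2 := congrArg (fun f : (V →ₗ[ℂ] V)ˣ => (f : V →ₗ[ℂ] V) u) (hcommU x)
    simpa [Units.val_mul, Module.End.mul_apply] using h2
  obtain ⟨c, hc⟩ := dixmier ρ hirr (ρG z) hcommE
  refine ⟨c, ?_⟩
  ext u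
  have hgzh : g = z * h := by rw [hz]; group
  rw [hgzh, map_mul]
  simp only [Units.val_mul, Module.End.mul_apply, LinearMap.smul_apply]
  exact hc _
end

section
/- Let Q be a finite quandle such that every ℂˣ-valued 2-cocycle on Inn(Q) (trivial action) is a 2-coboundary. Then a representation ρ : Q → GL(V) of Q over ℂ is irreducible if and only if there exist an irreducible group representation ρ' : Inn(Q) → GL(V) and a character χ of Q such that ρ(x) = χ(x) ρ'(L_x) for all x ∈ Q. -/
open scoped Quandles
section AuxEnv
variable {Q : Type*} [Rack Q]

theorem shelfhom_ext' {S T : Type*} [Shelf S] [Shelf T] (f g : ShelfHom S T)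
    (h : ∀ x, f.toFun x = g.toFun x) : f = g := by
  cases f; cases g; congr 1; funext x; exact h x

theorem qdl_hom_ext {G : Type*} [Group G] (F₁ F₂ : Rack.EnvelGroup Q →* G)
    (h : ∀ x : Q, F₁ (Rack.toEnvelGroup Q x) = F₂ (Rack.toEnvelGroup Q x)) : F₁ = F₂ := by
  have h1 : Rack.toEnvelGroup.map.symm F₁ = Rack.toEnvelGroup.map.symm F₂ := by
    show (Quandle.Conj.map F₁).comp (Rack.toEnvelGroup Q) = (Quandle.Conj.map F₂).comp (Rack.toEnvelGroup Q)
    exact shelfhom_ext' _ _ (fun x => h x)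
  calc F₁ = Rack.toEnvelGroup.map (Rack.toEnvelGroup.map.symm F₁) := (Equiv.apply_symm_apply _ _).symm
    _ = Rack.toEnvelGroup.map (Rack.toEnvelGroup.map.symm F₂) := by rw [h1]
    _ = F₂ := Equiv.apply_symm_apply _ _

theorem qdl_map_apply {G : Type*} [Group G] (f : ShelfHom Q (Quandle.Conj G)) (x : Q) :
    Rack.toEnvelGroup.map f (Rack.toEnvelGroup Q x) = f.toFun x := by
  have := Rack.toEnvelGroup.univ Q G f
  calc Rack.toEnvelGroup.map f (Rack.toEnvelGroup Q x)
      = ((Quandle.Conj.map (Rack.toEnvelGroup.map f)).comp (Rack.toEnvelGroup Q)).toFun x := rfl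
    _ = f.toFun x := by rw [this]

theorem qdl_thetaG_apply (x : Q) :
    QdlThetaG Q (Rack.toEnvelGroup Q x) = (QdlTheta Q).toFun x := qdl_map_apply _ x

theorem qdl_thetaG_surj : Function.Surjective (QdlThetaG Q) := by
  intro g
  have hg : (g : Equiv.Perm Q) ∈ Subgroup.closure (Set.range (Rack.act' (R := Q))) := g.2
  have : ∃ w : Rack.EnvelGroup Q, ((QdlThetaG Q w : QdlInn Q) : Equiv.Perm Q) = (g : Equiv.Perm Q) := by
    refine Subgroup.closure_induction ?_ ?_ ?_ ?_ hg
    · rintro _ ⟨x, rfl⟩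
      exact ⟨Rack.toEnvelGroup Q x, by rw [qdl_thetaG_apply]; rfl⟩
    · exact ⟨1, by simp⟩
    · rintro π₁ π₂ _ _ ⟨w₁, hw₁⟩ ⟨w₂, hw₂⟩
      exact ⟨w₁ * w₂, by rw [map_mul]; simp [hw₁, hw₂]⟩
    · rintro π _ ⟨w, hw⟩
      exact ⟨w⁻¹, by rw [map_inv]; simp [← hw]⟩
  obtain ⟨w, hw⟩ := this
  exact ⟨w, Subtype.ext hw⟩

end AuxEnv

section AuxSchur
variable {Q : Type*} {V : Type v} [AddCommGroup V] [Module ℂ V]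
open Polynomial

theorem commute_aeval' (f g : V →ₗ[ℂ] V) (h : Commute g f) (p : Polynomial ℂ) :
    Commute g (Polynomial.aeval f p) := by
  induction p using Polynomial.induction_on with
  | C a => simpa using (Algebra.commute_algebraMap_right a g)
  | add p q hp hq => simpa [map_add] using hp.add_right hq
  | monomial n a hp => simpa [map_mul, mul_assoc, pow_succ] using hp.mul_right (by simpa using h)

theorem qdl_rank_le [Finite Q] (ρ : Q → (V →ₗ[ℂ] V)ˣ) (hirr : QdlIrred ρ) [Nontrivial V] :
    Module.rank ℂ V ≤ Cardinal.aleph0 := by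
  obtain ⟨v, hv⟩ := exists_ne (0 : V)
  set F : List Q → V := fun l => ((l.map fun x => (ρ x : V →ₗ[ℂ] V)).prod) v with hF
  set W : Submodule ℂ V := Submodule.span ℂ (Set.range F) with hW
  have hinv : ∀ x : Q, ∀ w ∈ W, (ρ x : V →ₗ[ℂ] V) w ∈ W := by
    intro x w hw
    have : Submodule.map (ρ x : V →ₗ[ℂ] V) W ≤ W := by
      rw [hW, Submodule.map_span]
      apply Submodule.span_mono
      rintro _ ⟨_, ⟨l, rfl⟩, rfl⟩
      exact ⟨x :: l, by simp [hF, Module.End.mul_apply]⟩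
    exact this ⟨w, hw, rfl⟩
  have hWtop : W = ⊤ := by
    rcases hirr W hinv with h | h
    · exfalso
      apply hv
      have : v ∈ W := Submodule.subset_span ⟨[], by simp [hF]⟩
      simpa [h] using this
    · exact h
  have h2 : Cardinal.mk (Set.range F) ≤ Cardinal.aleph0 :=
    (Set.countable_range F).le_aleph0
  have h1 : Module.rank ℂ W ≤ Cardinal.aleph0 := (rank_span_le _).trans h2
  rw [hWtop] at h1
  rwa [rank_top] at h1

theorem qdl_schur [Finite Q] (ρ : Q → (V →ₗ[ℂ] V)ˣ) (hirr : QdlIrred ρ) [Nontrivial V]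
    (f : V →ₗ[ℂ] V) (hf : ∀ x : Q, Commute ((ρ x : V →ₗ[ℂ] V)) f) :
    ∃ c : ℂ, f = c • (1 : V →ₗ[ℂ] V) := by
  classical
  have hker : ∀ p : ℂ[X], (Polynomial.aeval f p ≠ 0) → ∀ w, Polynomial.aeval f p w = 0 → w = 0 := by
    intro p hp w hw
    have hinv : ∀ x : Q, ∀ u ∈ LinearMap.ker (Polynomial.aeval f p),
        (ρ x : V →ₗ[ℂ] V) u ∈ LinearMap.ker (Polynomial.aeval f p) := by
      intro x u hu
      rw [LinearMap.mem_ker] at hu ⊢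
      have hc := commute_aeval' f (ρ x : V →ₗ[ℂ] V) (hf x) p
      calc Polynomial.aeval f p ((ρ x : V →ₗ[ℂ] V) u)
          = ((Polynomial.aeval f p) * (ρ x : V →ₗ[ℂ] V)) u := rfl
        _ = (((ρ x : V →ₗ[ℂ] V)) * Polynomial.aeval f p) u := by rw [hc.eq]
        _ = (ρ x : V →ₗ[ℂ] V) (Polynomial.aeval f p u) := rfl
        _ = 0 := by rw [hu, map_zero]
    rcases hirr _ hinv with h | h
    · simpa [h] using (LinearMap.mem_ker.mpr hw : w ∈ LinearMap.ker (Polynomial.aeval f p))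
    · exfalso; apply hp
      ext u
      have : u ∈ LinearMap.ker (Polynomial.aeval f p) := h ▸ Submodule.mem_top
      simpa using this
  have hXC : ∀ μ : ℂ, Polynomial.aeval f (X - C μ) = f - μ • 1 := by
    intro μ
    simp [Module.algebraMap_end_eq_smul_id]
    rfl
  by_cases hex : ∃ c : ℂ, f = c • (1 : V →ₗ[ℂ] V)
  · exact hex
  exfalso
  push_neg at hex
  have hbij : ∀ μ : ℂ, Function.Bijective (f - μ • (1 : V →ₗ[ℂ] V)) := by
    intro μ
    have hg0 : f - μ • (1 : V →ₗ[ℂ] V) ≠ 0 := by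
      intro h
      exact hex μ (by rwa [sub_eq_zero] at h)
    have hgaev : f - μ • (1 : V →ₗ[ℂ] V) = Polynomial.aeval f (X - C μ) := (hXC μ).symm
    have hinj : Function.Injective (f - μ • (1 : V →ₗ[ℂ] V)) := by
      intro a b hab
      have : (f - μ • (1 : V →ₗ[ℂ] V)) (a - b) = 0 := by
        rw [map_sub, hab, sub_self]
      have := hker (X - C μ) (by rwa [← hgaev]) (a - b) (by rw [hXC μ]; exact this)
      exact sub_eq_zero.mp this
    constructor
    · exact hinj
    · set g := f - μ • (1 : V →ₗ[ℂ] V) with hg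
      have hcomm : ∀ x : Q, Commute ((ρ x : V →ₗ[ℂ] V)) g := by
        intro x
        exact ((hf x).sub_right (Commute.smul_right (Commute.one_right _) μ))
      have hinvr : ∀ x : Q, ∀ u ∈ LinearMap.range g, (ρ x : V →ₗ[ℂ] V) u ∈ LinearMap.range g := by
        rintro x _ ⟨w, rfl⟩
        refine ⟨(ρ x : V →ₗ[ℂ] V) w, ?_⟩
        calc g ((ρ x : V →ₗ[ℂ] V) w) = (g * (ρ x : V →ₗ[ℂ] V)) w := rfl
          _ = ((ρ x : V →ₗ[ℂ] V) * g) w := by rw [← (hcomm x).eq]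
          _ = (ρ x : V →ₗ[ℂ] V) (g w) := rfl
      rcases hirr _ hinvr with h | h
      · exfalso
        apply hg0
        ext u
        have : g u ∈ LinearMap.range g := ⟨u, rfl⟩
        rw [h] at this
        simpa using this
      · intro u
        have : u ∈ LinearMap.range g := h ▸ Submodule.mem_top
        exact this
  obtain ⟨v, hv⟩ := exists_ne (0 : V)
  set w : ℂ → V := fun μ => Function.surjInv (hbij μ).surjective v with hwdef
  have hwe : ∀ μ : ℂ, (f - μ • (1 : V →ₗ[ℂ] V)) (w μ) = v := fun μ =>
    Function.surjInv_eq (hbij μ).surjective v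
  have hli : LinearIndependent ℂ w := by
    rw [linearIndependent_iff']
    intro s c hsum i hi
    by_contra hci
    set p : ℂ[X] := ∑ μ ∈ s, C (c μ) * ∏ ν ∈ s.erase μ, (X - C ν) with hp
    have hqw : ∀ μ ∈ s, Polynomial.aeval f (∏ ν ∈ s, (X - C ν)) (w μ)
        = Polynomial.aeval f (∏ ν ∈ s.erase μ, (X - C ν)) v := by
      intro μ hμ
      rw [← Finset.prod_erase_mul s _ hμ, map_mul]
      have : Polynomial.aeval f (X - C μ) (w μ) = v := by rw [hXC]; exact hwe μ
      calc (Polynomial.aeval f (∏ ν ∈ s.erase μ, (X - C ν)) * Polynomial.aeval f (X - C μ)) (w μ)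
          = Polynomial.aeval f (∏ ν ∈ s.erase μ, (X - C ν)) (Polynomial.aeval f (X - C μ) (w μ)) := rfl
        _ = Polynomial.aeval f (∏ ν ∈ s.erase μ, (X - C ν)) v := by rw [this]
    have hpev : Polynomial.aeval f p v = 0 := by
      have h0 : Polynomial.aeval f (∏ ν ∈ s, (X - C ν)) (∑ μ ∈ s, c μ • w μ) = 0 := by
        rw [hsum, map_zero]
      rw [map_sum] at h0
      have : ∑ μ ∈ s, c μ • (Polynomial.aeval f (∏ ν ∈ s.erase μ, (X - C ν)) v) = 0 := by
        rw [← h0]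
        refine Finset.sum_congr rfl fun μ hμ => ?_
        rw [map_smul, hqw μ hμ]
      rw [hp, map_sum]
      rw [LinearMap.sum_apply]
      rw [← this]
      refine Finset.sum_congr rfl fun μ hμ => ?_
      rw [map_mul, aeval_C]
      calc (algebraMap ℂ (V →ₗ[ℂ] V) (c μ) * Polynomial.aeval f (∏ ν ∈ s.erase μ, (X - C ν))) v
          = algebraMap ℂ (V →ₗ[ℂ] V) (c μ) (Polynomial.aeval f (∏ ν ∈ s.erase μ, (X - C ν)) v) := rfl
        _ = c μ • (Polynomial.aeval f (∏ ν ∈ s.erase μ, (X - C ν)) v) := by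
            rw [Module.algebraMap_end_apply]
    have hpne : p ≠ 0 := by
      intro h0
      have : p.eval i = 0 := by rw [h0, eval_zero]
      rw [hp, eval_finset_sum] at this
      have heval : ∀ μ ∈ s, (C (c μ) * ∏ ν ∈ s.erase μ, (X - C ν)).eval i
          = if μ = i then c i * ∏ ν ∈ s.erase i, (i - ν) else 0 := by
        intro μ hμ
        by_cases hμi : μ = i
        · subst hμi
          simp [eval_prod]
        · rw [if_neg hμi]
          rw [eval_mul, eval_prod]
          have : i ∈ s.erase μ := Finset.mem_erase.mpr ⟨fun h => hμi h.symm, hi⟩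
          rw [Finset.prod_eq_zero this (by simp)]
          ring
      rw [Finset.sum_congr rfl heval, Finset.sum_ite_eq' s i _] at this
      rw [if_pos hi] at this
      apply hci
      rcases mul_eq_zero.mp this with h | h
      · exact h
      · exfalso
        rcases Finset.prod_eq_zero_iff.mp h with ⟨ν, hν, hνz⟩
        have : ν ≠ i := (Finset.mem_erase.mp hν).1
        exact this (by linear_combination -hνz)
    have hbijp : Function.Bijective (Polynomial.aeval f p) := by
      have hfact := (IsAlgClosed.splits p).eq_prod_roots
      rw [hfact, map_mul, aeval_C]
      have hprod : ∀ m : Multiset ℂ, Function.Bijective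
          (Polynomial.aeval f (m.map fun a => X - C a).prod) := by
        intro m
        induction m using Multiset.induction_on with
        | empty => simpa [Module.End.one_eq_id] using Function.bijective_id
        | cons a m ih =>
            rw [Multiset.map_cons, Multiset.prod_cons, map_mul]
            have h1 : Function.Bijective (Polynomial.aeval f (X - C a)) := by
              rw [hXC]; exact hbij a
            exact h1.comp ih
      have hlc : p.leadingCoeff ≠ 0 := leadingCoeff_ne_zero.mpr hpne
      have h2 : Function.Bijective (algebraMap ℂ (V →ₗ[ℂ] V) p.leadingCoeff) := by
        rw [Module.algebraMap_end_eq_smul_id]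
        constructor
        · intro a b hab
          have h3 : p.leadingCoeff • a = p.leadingCoeff • b := hab
          exact smul_right_injective V hlc h3
        · intro u
          exact ⟨p.leadingCoeff⁻¹ • u, by simp [smul_smul, hlc]⟩
      exact h2.comp (hprod _)
    have : Polynomial.aeval f p = 0 → False := by
      intro h0
      have : v = 0 := by
        apply hbijp.injective
        rw [h0]
        simp
      exact hv this
    apply this
    by_contra hne
    exact hv (hker p hne v hpev)
  have hcard := hli.cardinal_lift_le_rank
  have hrank := qdl_rank_le ρ hirr
  have h4 : Cardinal.lift.{0} (Module.rank ℂ V) ≤ Cardinal.lift.{0} (Cardinal.aleph0 : Cardinal.{v}) :=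
    Cardinal.lift_le.mpr hrank
  have hfin : Cardinal.lift.{v} (Cardinal.mk ℂ) ≤ (Cardinal.aleph0 : Cardinal.{v}) := by
    calc Cardinal.lift.{v} (Cardinal.mk ℂ) ≤ Cardinal.lift.{0} (Module.rank ℂ V) := hcard
      _ ≤ Cardinal.lift.{0} (Cardinal.aleph0 : Cardinal.{v}) := h4
      _ = (Cardinal.aleph0 : Cardinal.{v}) := Cardinal.lift_aleph0
  have : Cardinal.mk ℂ ≤ Cardinal.aleph0 := by
    rw [← Cardinal.lift_aleph0.{v,0}] at hfin
    exact Cardinal.lift_le.mp hfin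
  rw [Cardinal.mk_complex] at this
  exact absurd this (not_le.mpr Cardinal.aleph0_lt_continuum)

end AuxSchur

section AuxConj
variable {Q : Type*} [Rack Q] {V : Type v} [AddCommGroup V] [Module ℂ V]

/-- The subgroup of pairs (u, g) with u ρ(y) u⁻¹ = ρ(g y). -/
def qdlP (ρ : Q → (V →ₗ[ℂ] V)ˣ) : Subgroup ((V →ₗ[ℂ] V)ˣ × QdlInn Q) where
  carrier := { p | ∀ y : Q, p.1 * ρ y * p.1⁻¹ = ρ (((p.2 : QdlInn Q) : Equiv.Perm Q) y) }
  one_mem' := by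
    intro y
    show (1:(V →ₗ[ℂ] V)ˣ) * ρ y * (1:(V →ₗ[ℂ] V)ˣ)⁻¹ = ρ _
    rw [one_mul, inv_one, mul_one]
    rfl
  mul_mem' := by
    rintro ⟨u₁, g₁⟩ ⟨u₂, g₂⟩ h₁ h₂ y
    have e2 := h₂ y
    have e1 := h₁ (((g₂ : Equiv.Perm Q)) y)
    simp only [Prod.fst_mul, Prod.snd_mul]
    calc u₁ * u₂ * ρ y * (u₁ * u₂)⁻¹ = u₁ * (u₂ * ρ y * u₂⁻¹) * u₁⁻¹ := by group
      _ = u₁ * ρ ((g₂ : Equiv.Perm Q) y) * u₁⁻¹ := by rw [e2]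
      _ = ρ ((g₁ : Equiv.Perm Q) ((g₂ : Equiv.Perm Q) y)) := e1
      _ = ρ (((g₁ * g₂ : QdlInn Q) : Equiv.Perm Q) y) := rfl
  inv_mem' := by
    rintro ⟨u, g⟩ h y
    have e := h (((g : Equiv.Perm Q))⁻¹ y)
    rw [show ((g : Equiv.Perm Q)) (((g : Equiv.Perm Q))⁻¹ y) = y from Equiv.apply_symm_apply _ y] at e
    show u⁻¹ * ρ y * (u⁻¹)⁻¹ = ρ _
    calc u⁻¹ * ρ y * (u⁻¹)⁻¹ = u⁻¹ * (u * ρ (((g : Equiv.Perm Q))⁻¹ y) * u⁻¹) * (u⁻¹)⁻¹ := by rw [e]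
      _ = ρ (((g : Equiv.Perm Q))⁻¹ y) := by group

theorem qdl_conj_key (ρ : Q → (V →ₗ[ℂ] V)ˣ) (hρ : IsQdlRep ρ) :
    ∀ w : Rack.EnvelGroup Q, ∀ y : Q,
      (Rack.toEnvelGroup.map ⟨ρ, by intro x y; simpa [Quandle.conj_act_eq_conj] using hρ x y⟩ w) * ρ y *
        (Rack.toEnvelGroup.map ⟨ρ, by intro x y; simpa [Quandle.conj_act_eq_conj] using hρ x y⟩ w)⁻¹
      = ρ (((QdlThetaG Q w : QdlInn Q) : Equiv.Perm Q) y) := by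
  set jρ : ShelfHom Q (Quandle.Conj ((V →ₗ[ℂ] V)ˣ)) :=
    ⟨ρ, by intro x y; simpa [Quandle.conj_act_eq_conj] using hρ x y⟩ with hjρ
  set φ := Rack.toEnvelGroup.map jρ with hφ
  have hmem : ∀ x : Q, (ρ x, (QdlTheta Q).toFun x) ∈ qdlP ρ := by
    intro x y
    exact (hρ x y).symm
  set jP : ShelfHom Q (Quandle.Conj (qdlP ρ)) :=
    ⟨fun x => ⟨(ρ x, (QdlTheta Q).toFun x), hmem x⟩, by
      intro x y
      simp only [Quandle.conj_act_eq_conj]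
      apply Subtype.ext
      apply Prod.ext
      · exact hρ x y
      · show (QdlTheta Q).toFun (x ◃ y)
            = (QdlTheta Q).toFun x * (QdlTheta Q).toFun y * ((QdlTheta Q).toFun x)⁻¹
        have h5 := (QdlTheta Q).map_act' (x := x) (y := y)
        rw [Quandle.conj_act_eq_conj] at h5
        exact h5⟩ with hjP
  set Ψ := Rack.toEnvelGroup.map jP with hΨ
  have hfst : ((MonoidHom.fst _ _).comp ((qdlP ρ).subtype.comp Ψ)) = φ := by
    apply qdl_hom_ext
    intro x
    rw [hφ, qdl_map_apply]
    simp [hΨ, qdl_map_apply, hjP, hjρ]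
    rfl
  have hsnd : ((MonoidHom.snd _ _).comp ((qdlP ρ).subtype.comp Ψ)) = QdlThetaG Q := by
    apply qdl_hom_ext
    intro x
    rw [qdl_thetaG_apply]
    simp [hΨ, qdl_map_apply, hjP]
  intro w y
  have hw := (Ψ w).2 y
  have e1 : (Ψ w).1.1 = φ w := by rw [← hfst]; rfl
  have e2 : (Ψ w).1.2 = QdlThetaG Q w := by rw [← hsnd]; rfl
  rw [e1, e2] at hw
  exact hw

end AuxConj


section AuxGroup
variable {G : Type*} [Group G]

theorem central_mul_swap (a b A B : G) (hb : ∀ u : G, Commute b u) :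
    (a * A) * (b * B) = (a * b) * (A * B) :=
  Commute.mul_mul_mul_comm ((hb A).symm) a B

theorem central_left_comm (a A B : G) (ha : ∀ u : G, Commute a u) :
    A * (a * B) = a * (A * B) := by
  rw [← mul_assoc, ← (ha A).eq, mul_assoc]

theorem central_conj_conj (a b A B : G) (ha : ∀ u : G, Commute a u)
    (hb : ∀ u : G, Commute b u) :
    (a * A) * (b * B) * (a * A)⁻¹ = b * (A * B * A⁻¹) := by
  calc (a * A) * (b * B) * (a * A)⁻¹
      = (a * b) * (A * B) * (A⁻¹ * a⁻¹) := by rw [central_mul_swap a b A B hb, mul_inv_rev]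
    _ = (a * b) * ((A * B) * A⁻¹ * a⁻¹) := by rw [mul_assoc, ← mul_assoc (A * B)]
    _ = (a * b) * (a⁻¹ * (A * B * A⁻¹)) := by rw [← ((ha (A * B * A⁻¹)).inv_left).eq]
    _ = ((a * b) * a⁻¹) * (A * B * A⁻¹) := by rw [← mul_assoc]
    _ = b * (A * B * A⁻¹) := by rw [(ha b).eq, mul_assoc b a, mul_inv_cancel, mul_one]

end AuxGroup

/-- if every `ℂˣ`-valued 2-cocycle on `Inn(Q)` is a 2-coboundary (`Q` finite),
then a quandle representation `ρ` of `Q` is irreducible iff `ρ = χ · (ρ' ∘ θ)` for some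
irreducible linear representation `ρ'` of `Inn(Q)` and some character `χ` of `Q`. -/
theorem stmt8 (Q : Type*) [Quandle Q] [Finite Q]
    (hschur : ∀ α : QdlInn Q → QdlInn Q → ℂˣ,
      (∀ g h k : QdlInn Q, α g h * α (g * h) k = α h k * α g (h * k)) →
      ∃ β : QdlInn Q → ℂˣ, ∀ g h : QdlInn Q, α g h = β g * β h * (β (g * h))⁻¹)
    (V : Type*) [AddCommGroup V] [Module ℂ V]
    (ρ : Q → (V →ₗ[ℂ] V)ˣ) (hρ : IsQdlRep ρ) :
    QdlIrred ρ ↔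
      ∃ (ρ' : QdlInn Q →* (V →ₗ[ℂ] V)ˣ) (χ : Q → ℂˣ), GrpIrred ρ' ∧ QdlChar χ ∧
        ∀ x : Q, (ρ x : V →ₗ[ℂ] V) = (χ x : ℂ) • (ρ' (QdlTheta Q x) : V →ₗ[ℂ] V) := by
    classical
  constructor
  · -- forward direction
    intro hirr
    by_cases hV : Subsingleton V
    · refine ⟨1, fun _ => 1, ?_, fun _ _ => rfl, ?_⟩
      · intro W _
        right
        rw [eq_top_iff]
        intro u _
        rw [Subsingleton.elim u 0]
        exact W.zero_mem
      · intro x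
        apply LinearMap.ext
        intro u
        exact Subsingleton.elim _ _
    haveI : Nontrivial V := not_subsingleton_iff_nontrivial.mp hV
    set jρ : ShelfHom Q (Quandle.Conj ((V →ₗ[ℂ] V)ˣ)) :=
      ⟨ρ, by intro x y; simpa [Quandle.conj_act_eq_conj] using hρ x y⟩ with hjρ
    set φ : Rack.EnvelGroup Q →* (V →ₗ[ℂ] V)ˣ := Rack.toEnvelGroup.map jρ with hφ
    have hφx : ∀ x : Q, φ (Rack.toEnvelGroup Q x) = ρ x := fun x => qdl_map_apply jρ x
    have hconj : ∀ w : Rack.EnvelGroup Q, ∀ y : Q,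
        φ w * ρ y * (φ w)⁻¹ = ρ (((QdlThetaG Q w : QdlInn Q) : Equiv.Perm Q) y) :=
      qdl_conj_key ρ hρ
    -- the scalar embedding
    set σ : ℂˣ →* (V →ₗ[ℂ] V)ˣ := Units.map (algebraMap ℂ (V →ₗ[ℂ] V)).toMonoidHom with hσ
    have hσval : ∀ c : ℂˣ, ((σ c : (V →ₗ[ℂ] V)ˣ) : V →ₗ[ℂ] V) = (c : ℂ) • 1 := by
      intro c
      show algebraMap ℂ (V →ₗ[ℂ] V) (c : ℂ) = _
      rw [Module.algebraMap_end_eq_smul_id]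
      rfl
    have hone : (1 : V →ₗ[ℂ] V) ≠ 0 := by
      intro h
      obtain ⟨u, hu⟩ := exists_ne (0 : V)
      apply hu
      calc u = (1 : V →ₗ[ℂ] V) u := rfl
        _ = (0 : V →ₗ[ℂ] V) u := by rw [h]
        _ = 0 := rfl
    have hsmul_inj : ∀ (a b : ℂ) (u : V), u ≠ 0 → a • u = b • u → a = b := by
      intro a b u hu hab
      have : (a - b) • u = 0 := by rw [sub_smul, hab, sub_self]
      rcases smul_eq_zero.mp this with h | h
      · exact sub_eq_zero.mp h
      · exact absurd h hu
    have hσinj : Function.Injective σ := by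
      intro a b hab
      obtain ⟨u, hu⟩ := exists_ne (0 : V)
      apply Units.ext
      refine hsmul_inj _ _ u hu ?_
      calc (a : ℂ) • u = ((a : ℂ) • (1 : V →ₗ[ℂ] V)) u := rfl
        _ = ((b : ℂ) • (1 : V →ₗ[ℂ] V)) u := by rw [← hσval, ← hσval, hab]
        _ = (b : ℂ) • u := rfl
    have hσcen : ∀ (c : ℂˣ) (u : (V →ₗ[ℂ] V)ˣ), σ c * u = u * σ c := by
      intro c u
      apply Units.ext
      rw [Units.val_mul, Units.val_mul]
      show algebraMap ℂ (V →ₗ[ℂ] V) (c : ℂ) * (u : V →ₗ[ℂ] V)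
          = (u : V →ₗ[ℂ] V) * algebraMap ℂ (V →ₗ[ℂ] V) (c : ℂ)
      exact (Algebra.commutes _ _)
    -- kernel elements act by scalars
    have hsc : ∀ w : Rack.EnvelGroup Q, QdlThetaG Q w = 1 → ∃ c : ℂˣ, φ w = σ c := by
      intro w hw
      have hcomm : ∀ x : Q, Commute ((ρ x : V →ₗ[ℂ] V)) ((φ w : (V →ₗ[ℂ] V)ˣ) : V →ₗ[ℂ] V) := by
        intro x
        have h1 := hconj w x
        rw [hw] at h1
        have h2 : ((1 : QdlInn Q) : Equiv.Perm Q) x = x := rfl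
        rw [h2] at h1
        have h3 : φ w * ρ x = ρ x * φ w := mul_inv_eq_iff_eq_mul.mp h1
        have h4 := congrArg Units.val h3
        rw [Units.val_mul, Units.val_mul] at h4
        exact h4.symm
      obtain ⟨c, hc⟩ := qdl_schur ρ hirr ((φ w : (V →ₗ[ℂ] V)ˣ) : V →ₗ[ℂ] V) hcomm
      have hc0 : c ≠ 0 := by
        intro h0
        rw [h0, zero_smul] at hc
        have h5 : ((φ w : (V →ₗ[ℂ] V)ˣ) : V →ₗ[ℂ] V) * (((φ w)⁻¹ : (V →ₗ[ℂ] V)ˣ) : V →ₗ[ℂ] V)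
            = 1 := by
          rw [← Units.val_mul, mul_inv_cancel, Units.val_one]
        rw [hc, zero_mul] at h5
        exact hone h5.symm
      refine ⟨Units.mk0 c hc0, Units.ext ?_⟩
      rw [hσval]
      exact hc
    -- a section of θG
    choose sec hsec using qdl_thetaG_surj (Q := Q)
    have hker2 : ∀ g h : QdlInn Q, QdlThetaG Q (sec g * sec h * (sec (g * h))⁻¹) = 1 := by
      intro g h
      rw [map_mul, map_mul, map_inv, hsec, hsec, hsec, mul_inv_cancel]
    choose α hα using fun (g h : QdlInn Q) => hsc _ (hker2 g h)
    have hταu : ∀ g h : QdlInn Q, φ (sec g) * φ (sec h) = σ (α g h) * φ (sec (g * h)) := by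
      intro g h
      have h1 := hα g h
      rw [map_mul, map_mul, map_inv] at h1
      exact mul_inv_eq_iff_eq_mul.mp h1
    -- α is a 2-cocycle
    have hcoc : ∀ g h k : QdlInn Q, α g h * α (g * h) k = α h k * α g (h * k) := by
      intro g h k
      apply hσinj
      have e1 : φ (sec g) * φ (sec h) * φ (sec k)
          = σ (α g h) * σ (α (g * h) k) * φ (sec (g * h * k)) := by
        rw [hταu g h, mul_assoc (σ (α g h)), hταu (g * h) k, ← mul_assoc]
      have hσcomm : ∀ (c : ℂˣ) (u : (V →ₗ[ℂ] V)ˣ), Commute (σ c) u := fun c u => hσcen c u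
      have e2 : φ (sec g) * φ (sec h) * φ (sec k)
          = σ (α h k) * σ (α g (h * k)) * φ (sec (g * h * k)) := by
        calc φ (sec g) * φ (sec h) * φ (sec k)
            = φ (sec g) * (σ (α h k) * φ (sec (h * k))) := by rw [mul_assoc, hταu h k]
          _ = σ (α h k) * (φ (sec g) * φ (sec (h * k))) :=
              central_left_comm _ _ _ (hσcomm (α h k))
          _ = σ (α h k) * (σ (α g (h * k)) * φ (sec (g * (h * k)))) := by rw [hταu g (h * k)]
          _ = σ (α h k) * σ (α g (h * k)) * φ (sec (g * h * k)) := by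
              rw [← mul_assoc, show g * (h * k) = g * h * k from (mul_assoc g h k).symm]
      have e3 := e1.symm.trans e2
      rw [map_mul, map_mul]
      exact mul_right_cancel e3
    obtain ⟨β, hβ⟩ := hschur α hcoc
    -- the twisted representation
    set τ : QdlInn Q → (V →ₗ[ℂ] V)ˣ := fun g => σ (β g)⁻¹ * φ (sec g) with hτ
    have hσcomm : ∀ (c : ℂˣ) (u : (V →ₗ[ℂ] V)ˣ), Commute (σ c) u := fun c u => hσcen c u
    have hcoef : ∀ g h : QdlInn Q, σ (β g)⁻¹ * σ (β h)⁻¹ * σ (α g h) = σ (β (g * h))⁻¹ := by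
      intro g h
      rw [← map_mul, ← map_mul]
      congr 1
      rw [hβ g h]
      apply Units.ext
      have h6 : (β g : ℂ) ≠ 0 := Units.ne_zero _
      have h7 : (β h : ℂ) ≠ 0 := Units.ne_zero _
      push_cast
      field_simp
    have hmul : ∀ g h : QdlInn Q, τ (g * h) = τ g * τ h := by
      intro g h
      show σ (β (g * h))⁻¹ * φ (sec (g * h)) = σ (β g)⁻¹ * φ (sec g) * (σ (β h)⁻¹ * φ (sec h))
      calc σ (β (g * h))⁻¹ * φ (sec (g * h))
          = σ (β g)⁻¹ * σ (β h)⁻¹ * σ (α g h) * φ (sec (g * h)) := by rw [hcoef]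
        _ = σ (β g)⁻¹ * σ (β h)⁻¹ * (σ (α g h) * φ (sec (g * h))) := by rw [mul_assoc]
        _ = σ (β g)⁻¹ * σ (β h)⁻¹ * (φ (sec g) * φ (sec h)) := by rw [← hταu g h]
        _ = σ (β g)⁻¹ * φ (sec g) * (σ (β h)⁻¹ * φ (sec h)) := by
            rw [central_mul_swap _ _ _ _ (hσcomm (β h)⁻¹)]
    set ρ' : QdlInn Q →* (V →ₗ[ℂ] V)ˣ := MonoidHom.mk' τ hmul with hρ'
    -- the character
    have hkx : ∀ x : Q,
        QdlThetaG Q (sec ((QdlTheta Q).toFun x) * (Rack.toEnvelGroup Q x)⁻¹) = 1 := by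
      intro x
      rw [map_mul, map_inv, hsec, qdl_thetaG_apply, mul_inv_cancel]
    choose cx hcx using fun x => hsc _ (hkx x)
    have hsecx : ∀ x : Q, φ (sec ((QdlTheta Q).toFun x)) = σ (cx x) * ρ x := by
      intro x
      have h1 := hcx x
      rw [map_mul, map_inv, hφx] at h1
      exact mul_inv_eq_iff_eq_mul.mp h1
    set χ : Q → ℂˣ := fun x => β ((QdlTheta Q).toFun x) * (cx x)⁻¹ with hχdef
    have hrel : ∀ x : Q, ρ x = σ (χ x) * ρ' ((QdlTheta Q).toFun x) := by
      intro x
      have h1 : ρ' ((QdlTheta Q).toFun x) = σ (β ((QdlTheta Q).toFun x))⁻¹ *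
          (σ (cx x) * ρ x) := by
        show τ _ = _
        rw [hτ]
        show σ (β ((QdlTheta Q).toFun x))⁻¹ * φ (sec ((QdlTheta Q).toFun x)) = _
        rw [hsecx]
      rw [h1, ← mul_assoc, ← mul_assoc, ← map_mul, ← map_mul]
      have h2 : χ x * (β ((QdlTheta Q).toFun x))⁻¹ * cx x = 1 := by
        rw [hχdef]
        apply Units.ext
        have h6 : (β ((QdlTheta Q).toFun x) : ℂ) ≠ 0 := Units.ne_zero _
        have h7 : (cx x : ℂ) ≠ 0 := Units.ne_zero _
        push_cast
        field_simp
      rw [h2, map_one, one_mul]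
    -- conjugation identity for θ
    have hθconj : ∀ x y : Q, (QdlTheta Q).toFun (x ◃ y)
        = (QdlTheta Q).toFun x * (QdlTheta Q).toFun y * ((QdlTheta Q).toFun x)⁻¹ := by
      intro x y
      have h5 := (QdlTheta Q).map_act' (x := x) (y := y)
      rw [Quandle.conj_act_eq_conj] at h5
      exact h5
    -- χ is a character
    have hchar : QdlChar χ := by
      intro x y
      apply hσinj
      have e0 : σ (χ (x ◃ y)) * ρ' ((QdlTheta Q).toFun (x ◃ y))
          = σ (χ y) * ρ' ((QdlTheta Q).toFun (x ◃ y)) := by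
        calc σ (χ (x ◃ y)) * ρ' ((QdlTheta Q).toFun (x ◃ y)) = ρ (x ◃ y) := (hrel _).symm
          _ = ρ x * ρ y * (ρ x)⁻¹ := hρ x y
          _ = (σ (χ x) * ρ' ((QdlTheta Q).toFun x)) * (σ (χ y) * ρ' ((QdlTheta Q).toFun y)) *
              (σ (χ x) * ρ' ((QdlTheta Q).toFun x))⁻¹ := by rw [← hrel, ← hrel]
          _ = σ (χ y) * (ρ' ((QdlTheta Q).toFun x) * ρ' ((QdlTheta Q).toFun y) *
              (ρ' ((QdlTheta Q).toFun x))⁻¹) :=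
                central_conj_conj _ _ _ _ (fun u => hσcen (χ x) u) (fun u => hσcen (χ y) u)
          _ = σ (χ y) * ρ' ((QdlTheta Q).toFun (x ◃ y)) := by
                rw [← map_mul, ← map_inv, ← map_mul, ← hθconj]
      exact mul_right_cancel e0
    -- irreducibility of ρ'
    have hgi : GrpIrred ρ' := by
      intro W hW
      apply hirr W
      intro x u hu
      have h1 : ((ρ x : (V →ₗ[ℂ] V)ˣ) : V →ₗ[ℂ] V) u
          = (χ x : ℂ) • (((ρ' ((QdlTheta Q).toFun x) : (V →ₗ[ℂ] V)ˣ) : V →ₗ[ℂ] V)) u := by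
        rw [hrel x, Units.val_mul, hσval, smul_mul_assoc, one_mul]
        rfl
      rw [h1]
      exact W.smul_mem _ (hW _ u hu)
    refine ⟨ρ', χ, hgi, hchar, ?_⟩
    intro x
    have h1 : ρ x = σ (χ x) * ρ' (QdlTheta Q x) := hrel x
    calc ((ρ x : (V →ₗ[ℂ] V)ˣ) : V →ₗ[ℂ] V)
        = ((σ (χ x) * ρ' (QdlTheta Q x) : (V →ₗ[ℂ] V)ˣ) : V →ₗ[ℂ] V) := by rw [h1]
      _ = (χ x : ℂ) • ((ρ' (QdlTheta Q x) : (V →ₗ[ℂ] V)ˣ) : V →ₗ[ℂ] V) := by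
          rw [Units.val_mul, hσval, smul_mul_assoc, one_mul]
  · -- backward direction
    rintro ⟨ρ', χ, hgi, hχ, heq⟩
    intro W hW
    apply hgi W
    intro g v hv
    obtain ⟨π, hπ⟩ := g
    haveI : Finite (QdlInn Q) := Subtype.finite
    revert v hv
    refine Subgroup.closure_induction
      (p := fun π hπ => ∀ v ∈ W, ((ρ' ⟨π, hπ⟩ : (V →ₗ[ℂ] V)ˣ) : V →ₗ[ℂ] V) v ∈ W)
      ?_ ?_ ?_ ?_ hπ
    · rintro π ⟨x, rfl⟩ v hv
      have e : (⟨Rack.act' x, Subgroup.subset_closure ⟨x, rfl⟩⟩ : QdlInn Q)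
          = QdlTheta Q x := Subtype.ext rfl
      have e2 : ∀ (h : Rack.act' x ∈ QdlInn Q),
          (⟨Rack.act' x, h⟩ : QdlInn Q) = QdlTheta Q x := fun _ => Subtype.ext rfl
      show ((ρ' (QdlTheta Q x) : (V →ₗ[ℂ] V)ˣ) : V →ₗ[ℂ] V) v ∈ W
      have h2 := heq x
      have h3 : ((ρ' (QdlTheta Q x) : (V →ₗ[ℂ] V)ˣ) : V →ₗ[ℂ] V) v
          = ((χ x : ℂ))⁻¹ • (((ρ x : (V →ₗ[ℂ] V)ˣ) : V →ₗ[ℂ] V) v) := by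
        rw [h2]
        rw [LinearMap.smul_apply, smul_smul, inv_mul_cancel₀ (Units.ne_zero (χ x)), one_smul]
      rw [h3]
      exact W.smul_mem _ (hW x v hv)
    · intro v hv
      have e : ∀ (h : (1 : Equiv.Perm Q) ∈ QdlInn Q), (⟨1, h⟩ : QdlInn Q) = 1 :=
        fun _ => Subtype.ext rfl
      show ((ρ' 1 : (V →ₗ[ℂ] V)ˣ) : V →ₗ[ℂ] V) v ∈ W
      rw [map_one]
      simpa using hv
    · intro π₁ π₂ h1 h2 ih1 ih2 v hv
      have e : (⟨π₁ * π₂, mul_mem h1 h2⟩ : QdlInn Q) = ⟨π₁, h1⟩ * ⟨π₂, h2⟩ := rfl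
      rw [e, map_mul]
      have e2 : ((ρ' ⟨π₁, h1⟩ * ρ' ⟨π₂, h2⟩ : (V →ₗ[ℂ] V)ˣ) : V →ₗ[ℂ] V) v
          = ((ρ' ⟨π₁, h1⟩ : (V →ₗ[ℂ] V)ˣ) : V →ₗ[ℂ] V)
            (((ρ' ⟨π₂, h2⟩ : (V →ₗ[ℂ] V)ˣ) : V →ₗ[ℂ] V) v) := rfl
      rw [e2]
      exact ih1 _ (ih2 v hv)
    · intro π h ih v hv
      set t : QdlInn Q := ⟨π, h⟩ with ht
      have e : (⟨π⁻¹, inv_mem h⟩ : QdlInn Q) = t⁻¹ := rfl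
      rw [e]
      have hpos : 0 < orderOf t := orderOf_pos t
      have hord : t ^ orderOf t = 1 := pow_orderOf_eq_one t
      have hinv : t⁻¹ = t ^ (orderOf t - 1) := by
        have h8 : t ^ (orderOf t - 1) * t = 1 := by
          rw [← pow_succ, Nat.sub_add_cancel hpos, hord]
        exact inv_eq_of_mul_eq_one_left h8
      rw [hinv, map_pow]
      have hp : ∀ k : ℕ, ∀ u ∈ W, ((ρ' t ^ k : (V →ₗ[ℂ] V)ˣ) : V →ₗ[ℂ] V) u ∈ W := by
        intro k
        induction k with
        | zero => intro u hu; simpa using hu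
        | succ k ihk =>
            intro u hu
            rw [pow_succ]
            have e3 : ((ρ' t ^ k * ρ' t : (V →ₗ[ℂ] V)ˣ) : V →ₗ[ℂ] V) u
                = ((ρ' t ^ k : (V →ₗ[ℂ] V)ˣ) : V →ₗ[ℂ] V)
                  (((ρ' t : (V →ₗ[ℂ] V)ˣ) : V →ₗ[ℂ] V) u) := rfl
            rw [e3]
            exact ihk _ (ih u hu)
      exact hp _ v hv
end

section
/- Let G be a finite group such that every ℂˣ-valued 2-cocycle on G (trivial action) is a 2-coboundary. Then a representation ρ : Conj(G) → GL(V) of the quandle Conj(G) over ℂ is irreducible if and only if there exist an irreducible group representation ρ' : G → GL(V) and a map χ : G → ℂˣ with χ(g h g⁻¹) = χ(h) for all g,h ∈ G, such that ρ(g) = χ(g) ρ'(g) for all g ∈ G. -/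
open scoped Quandles
section SchurAux

open Polynomial

variable {G : Type*} {V : Type*} [AddCommGroup V] [Module ℂ V]

private lemma aux_bij (ρ : G → (V →ₗ[ℂ] V)ˣ)
    (hirr : ∀ W : Submodule ℂ V, (∀ x : G, ∀ v ∈ W, (ρ x : V →ₗ[ℂ] V) v ∈ W) → W = ⊥ ∨ W = ⊤)
    (L : V →ₗ[ℂ] V)
    (hc : ∀ (g : G) (v : V), (ρ g : V →ₗ[ℂ] V) (L v) = L ((ρ g : V →ₗ[ℂ] V) v))
    (hL : L ≠ 0) : Function.Bijective L := by
  constructor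
  · rw [← LinearMap.ker_eq_bot (M := V)]
    have hker : ∀ x : G, ∀ v ∈ LinearMap.ker L, (ρ x : V →ₗ[ℂ] V) v ∈ LinearMap.ker L := by
      intro x v hv
      rw [LinearMap.mem_ker] at hv ⊢
      rw [← hc, hv, map_zero]
    rcases hirr _ hker with h | h
    · exact h
    · exact absurd (LinearMap.ker_eq_top.mp h) hL
  · rw [← LinearMap.range_eq_top (f := L)]
    have hran : ∀ x : G, ∀ v ∈ LinearMap.range L, (ρ x : V →ₗ[ℂ] V) v ∈ LinearMap.range L := by
      intro x v hv
      obtain ⟨w, rfl⟩ := LinearMap.mem_range.mp hv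
      exact LinearMap.mem_range.mpr ⟨(ρ x : V →ₗ[ℂ] V) w, (hc x w).symm⟩
    rcases hirr _ hran with h | h
    · exact absurd (LinearMap.range_eq_bot.mp h) hL
    · exact h

private lemma aux_rank [Countable G] [Nontrivial V] (ρ : G → (V →ₗ[ℂ] V)ˣ)
    (hirr : ∀ W : Submodule ℂ V, (∀ x : G, ∀ v ∈ W, (ρ x : V →ₗ[ℂ] V) v ∈ W) → W = ⊥ ∨ W = ⊤) :
    Module.rank ℂ V ≤ Cardinal.aleph0 := by
  obtain ⟨v₀, hv₀⟩ := exists_ne (0 : V)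
  set f : List (G × Bool) → V := fun l =>
    ((((l.map fun p => if p.2 then ρ p.1 else (ρ p.1)⁻¹).prod : (V →ₗ[ℂ] V)ˣ) : V →ₗ[ℂ] V)) v₀
    with hf
  have hmem : ∀ x : G, ∀ v ∈ Submodule.span ℂ (Set.range f),
      (ρ x : V →ₗ[ℂ] V) v ∈ Submodule.span ℂ (Set.range f) := by
    intro x v hv
    have hle : Submodule.map (ρ x : V →ₗ[ℂ] V) (Submodule.span ℂ (Set.range f)) ≤
        Submodule.span ℂ (Set.range f) := by
      rw [Submodule.map_span]
      apply Submodule.span_le.mpr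
      rintro _ ⟨_, ⟨l, rfl⟩, rfl⟩
      apply Submodule.subset_span
      refine ⟨(x, true) :: l, ?_⟩
      simp [hf, List.prod_cons, Units.val_mul, Module.End.mul_apply]
    exact hle (Submodule.mem_map_of_mem hv)
  have hW : Submodule.span ℂ (Set.range f) = ⊤ := by
    rcases hirr _ hmem with h | h
    · exfalso
      apply hv₀
      have hmem0 : v₀ ∈ Submodule.span ℂ (Set.range f) :=
        Submodule.subset_span ⟨[], by simp [hf]⟩
      rw [h] at hmem0
      simpa using hmem0
    · exact h
  have h1 : Module.rank ℂ V ≤ Cardinal.mk (Set.range f) := by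
    have h2 := rank_span_le (R := ℂ) (Set.range f)
    rwa [hW, rank_top] at h2
  haveI : Countable (Set.range f) := (Set.countable_range f).to_subtype
  exact h1.trans Cardinal.mk_le_aleph0

private lemma aux_schur [Countable G] [Nontrivial V] (ρ : G → (V →ₗ[ℂ] V)ˣ)
    (hirr : ∀ W : Submodule ℂ V, (∀ x : G, ∀ v ∈ W, (ρ x : V →ₗ[ℂ] V) v ∈ W) → W = ⊥ ∨ W = ⊤)
    (T : (V →ₗ[ℂ] V)ˣ)
    (hT : ∀ (g : G) (v : V), (ρ g : V →ₗ[ℂ] V) ((T : V →ₗ[ℂ] V) v)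
      = (T : V →ₗ[ℂ] V) ((ρ g : V →ₗ[ℂ] V) v)) :
    ∃ c : ℂˣ, (T : V →ₗ[ℂ] V) = (c : ℂ) • 1 := by
  classical
  obtain ⟨v₀, hv₀⟩ := exists_ne (0 : V)
  suffices h : ∃ c : ℂ, (T : V →ₗ[ℂ] V) = c • 1 by
    obtain ⟨c, hc⟩ := h
    have hc0 : c ≠ 0 := by
      rintro rfl
      have h1 : ((T⁻¹ : (V →ₗ[ℂ] V)ˣ) : V →ₗ[ℂ] V) ((T : V →ₗ[ℂ] V) v₀) = v₀ := by
        rw [← Module.End.mul_apply, Units.inv_mul, Module.End.one_apply]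
      rw [hc] at h1
      simp only [zero_smul, LinearMap.zero_apply, map_zero] at h1
      exact hv₀ h1.symm
    exact ⟨Units.mk0 c hc0, hc⟩
  by_contra hcon
  push_neg at hcon
  have hbij : ∀ c : ℂ, Function.Bijective ⇑((T : V →ₗ[ℂ] V) - c • (1 : V →ₗ[ℂ] V)) := by
    intro c
    apply aux_bij ρ hirr
    · intro g v
      simp only [LinearMap.sub_apply, LinearMap.smul_apply, Module.End.one_apply, map_sub,
        map_smul]
      rw [hT]
    · exact sub_ne_zero.mpr (hcon c)
  set e : ℂ → (V ≃ₗ[ℂ] V) := fun c =>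
    LinearEquiv.ofBijective ((T : V →ₗ[ℂ] V) - c • (1 : V →ₗ[ℂ] V)) (hbij c) with he
  set F : ℂ → V := fun c => (e c).symm v₀ with hF
  have hFe : ∀ c : ℂ, ((T : V →ₗ[ℂ] V) - c • (1 : V →ₗ[ℂ] V)) (F c) = v₀ := by
    intro c
    have h1 : (e c) ((e c).symm v₀) = v₀ := (e c).apply_symm_apply v₀
    simpa [he, hF, LinearEquiv.ofBijective_apply] using h1
  have haux : ∀ c : ℂ, Polynomial.aeval (T : V →ₗ[ℂ] V) (X - C c)
      = (T : V →ₗ[ℂ] V) - c • (1 : V →ₗ[ℂ] V) := by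
    intro c
    rw [map_sub, Polynomial.aeval_X, Polynomial.aeval_C]
    ext v
    simp [Module.algebraMap_end_apply, LinearMap.sub_apply]
  have hinj : ∀ p : ℂ[X], p ≠ 0 →
      Function.Injective ⇑(Polynomial.aeval (T : V →ₗ[ℂ] V) p) := by
    have main : ∀ (n : ℕ) (p : ℂ[X]), p.natDegree = n → p ≠ 0 →
        Function.Injective ⇑(Polynomial.aeval (T : V →ₗ[ℂ] V) p) := by
      intro n
      induction n using Nat.strong_induction_on with
      | _ n ih =>
        intro p hdeg hp
        rcases Nat.eq_zero_or_pos n with rfl | hn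
        · have hpC := Polynomial.eq_C_of_natDegree_eq_zero hdeg
          have hc0 : p.coeff 0 ≠ 0 := fun h => hp (by rw [hpC, h, map_zero])
          rw [hpC]
          intro a b hab
          simp only [Polynomial.aeval_C, Module.algebraMap_end_apply] at hab
          exact smul_right_injective V hc0 hab
        · have hdeg0 : p.degree ≠ 0 := by
            intro h
            have h2 := Polynomial.natDegree_eq_zero_iff_degree_le_zero.mpr h.le
            omega
          obtain ⟨c, hc⟩ := IsAlgClosed.exists_root p hdeg0
          obtain ⟨q, hq⟩ := Polynomial.dvd_iff_isRoot.mpr hc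
          have hq0 : q ≠ 0 := by rintro rfl; rw [mul_zero] at hq; exact hp hq
          have hXc : (X - C c : ℂ[X]) ≠ 0 := Polynomial.X_sub_C_ne_zero c
          have hdq : q.natDegree < n := by
            have h3 := Polynomial.natDegree_mul hXc hq0
            rw [← hq, hdeg, Polynomial.natDegree_X_sub_C] at h3
            omega
          rw [hq, map_mul]
          intro a b hab
          rw [Module.End.mul_apply, Module.End.mul_apply] at hab
          have hinj1 : Function.Injective ⇑(Polynomial.aeval (T : V →ₗ[ℂ] V) (X - C c)) := by
            rw [haux c]; exact (hbij c).injective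
          exact ih _ hdq q rfl hq0 (hinj1 hab)
    exact fun p hp => main p.natDegree p rfl hp
  have hli : LinearIndependent ℂ F := by
    rw [linearIndependent_iff']
    intro s g hsum i hi
    by_contra hgi
    set P : ℂ[X] := ∑ c ∈ s, Polynomial.C (g c) * ∏ d ∈ s.erase c, (X - C d) with hP
    have happ : ∀ c ∈ s, (Polynomial.aeval (T : V →ₗ[ℂ] V) (∏ d ∈ s, (X - C d))) (F c)
        = (Polynomial.aeval (T : V →ₗ[ℂ] V) (∏ d ∈ s.erase c, (X - C d))) v₀ := by
      intro c hc
      rw [← Finset.prod_erase_mul s _ hc, map_mul, Module.End.mul_apply, haux c, hFe c]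
    have hv : (Polynomial.aeval (T : V →ₗ[ℂ] V) P) v₀ = 0 := by
      have h0 := congrArg (⇑(Polynomial.aeval (T : V →ₗ[ℂ] V) (∏ d ∈ s, (X - C d)))) hsum
      rw [map_zero, map_sum] at h0
      have h1 : ∑ c ∈ s, g c •
          (Polynomial.aeval (T : V →ₗ[ℂ] V) (∏ d ∈ s.erase c, (X - C d))) v₀ = 0 := by
        rw [← h0]
        refine (Finset.sum_congr rfl ?_).symm
        intro c hc
        rw [map_smul, happ c hc]
      rw [hP, map_sum, LinearMap.sum_apply]
      rw [← h1]
      refine Finset.sum_congr rfl ?_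
      intro c hc
      rw [map_mul, Module.End.mul_apply, Polynomial.aeval_C, Module.algebraMap_end_apply]
    have hP0 : P ≠ 0 := by
      intro h
      have hev := congrArg (Polynomial.eval i) h
      rw [hP] at hev
      simp only [Polynomial.eval_zero, Polynomial.eval_finset_sum, Polynomial.eval_mul,
        Polynomial.eval_C, Polynomial.eval_prod, Polynomial.eval_sub, Polynomial.eval_X] at hev
      rw [Finset.sum_eq_single i] at hev
      · rcases mul_eq_zero.mp hev with h | h
        · exact hgi h
        · obtain ⟨d, hd, hd0⟩ := Finset.prod_eq_zero_iff.mp h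
          exact (Finset.mem_erase.mp hd).1 (sub_eq_zero.mp hd0).symm
      · intro c hc hci
        refine mul_eq_zero_of_right _ (Finset.prod_eq_zero (Finset.mem_erase.mpr ⟨?_, hi⟩) ?_)
        · exact fun h => hci h.symm
        · exact sub_self i
      · intro h
        exact absurd hi h
    have := hinj P hP0 (show (Polynomial.aeval (T : V →ₗ[ℂ] V) P) v₀
      = (Polynomial.aeval (T : V →ₗ[ℂ] V) P) 0 by rw [map_zero, hv])
    exact hv₀ this
  have hr := aux_rank (G := G) ρ hirr
  have hcard := hli.cardinal_lift_le_rank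
  have h3 := hcard.trans (Cardinal.lift_le.mpr hr)
  rw [Cardinal.mk_complex, Cardinal.lift_continuum, Cardinal.lift_aleph0] at h3
  exact absurd h3 (not_le_of_gt Cardinal.aleph0_lt_continuum)

end SchurAux

/-- if `G` is a finite group all of whose `ℂˣ`-valued 2-cocycles are
2-coboundaries, then a representation of the quandle `Conj(G)` is irreducible iff it is
the product of a conjugation-invariant `ℂˣ`-valued function and an irreducible linear
representation of `G`. -/
theorem stmt9 (G : Type*) [Group G] [Finite G]
    (hschur : ∀ α : G → G → ℂˣ,
      (∀ g h k : G, α g h * α (g * h) k = α h k * α g (h * k)) →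
      ∃ β : G → ℂˣ, ∀ g h : G, α g h = β g * β h * (β (g * h))⁻¹)
    (V : Type*) [AddCommGroup V] [Module ℂ V]
    (ρ : G → (V →ₗ[ℂ] V)ˣ) (hρ : ∀ g h : G, ρ (g * h * g⁻¹) = ρ g * ρ h * (ρ g)⁻¹) :
    QdlIrred ρ ↔
      ∃ (ρ' : G →* (V →ₗ[ℂ] V)ˣ) (χ : G → ℂˣ), GrpIrred ρ' ∧
        (∀ g h : G, χ (g * h * g⁻¹) = χ h) ∧
        ∀ g : G, (ρ g : V →ₗ[ℂ] V) = (χ g : ℂ) • (ρ' g : V →ₗ[ℂ] V) := by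
  constructor
  · intro hirr
    rcases subsingleton_or_nontrivial V with hV | hV
    · refine ⟨1, fun _ => 1, ?_, fun g h => rfl, ?_⟩
      · intro W _
        left
        ext v
        simp [Subsingleton.elim v (0 : V)]
      · intro g
        ext v
        exact Subsingleton.elim _ _
    · obtain ⟨v₀, hv₀⟩ := exists_ne (0 : V)
      have hconj : ∀ a b : G, (ρ a)⁻¹ * ρ b * ρ a = ρ (a⁻¹ * b * a) := by
        intro a b
        have h2 : a * (a⁻¹ * b * a) * a⁻¹ = b := by group
        have h := hρ a (a⁻¹ * b * a)
        rw [h2] at h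
        rw [h]
        group
      have hcomm : ∀ g h k : G,
          (ρ g * ρ h * (ρ (g * h))⁻¹) * ρ k = ρ k * (ρ g * ρ h * (ρ (g * h))⁻¹) := by
        intro g h k
        have e1 : ρ g * ρ h * (ρ (g * h))⁻¹ * ρ k * (ρ g * ρ h * (ρ (g * h))⁻¹)⁻¹
            = ρ g * (ρ h * ((ρ (g * h))⁻¹ * ρ k * ρ (g * h)) * (ρ h)⁻¹) * (ρ g)⁻¹ := by group
        rw [hconj (g * h) k, ← hρ h, ← hρ g] at e1
        have e4 : g * (h * ((g * h)⁻¹ * k * (g * h)) * h⁻¹) * g⁻¹ = k := by group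
        rw [e4] at e1
        calc (ρ g * ρ h * (ρ (g * h))⁻¹) * ρ k
            = (ρ g * ρ h * (ρ (g * h))⁻¹ * ρ k * (ρ g * ρ h * (ρ (g * h))⁻¹)⁻¹) *
              (ρ g * ρ h * (ρ (g * h))⁻¹) := by group
          _ = ρ k * (ρ g * ρ h * (ρ (g * h))⁻¹) := by rw [e1]
      have hs : ∀ g h : G, ∃ c : ℂˣ,
          ((ρ g * ρ h * (ρ (g * h))⁻¹ : (V →ₗ[ℂ] V)ˣ) : V →ₗ[ℂ] V) = (c : ℂ) • 1 := by
        intro g h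
        apply aux_schur ρ hirr
        intro k v
        have h5 := congrArg (fun w : (V →ₗ[ℂ] V)ˣ => ((w : V →ₗ[ℂ] V)) v) (hcomm g h k)
        simpa [Units.val_mul, Module.End.mul_apply] using h5.symm
      choose α hα using hs
      set u : ℂˣ →* (V →ₗ[ℂ] V)ˣ :=
        Units.map (algebraMap ℂ (V →ₗ[ℂ] V) : ℂ →+* (V →ₗ[ℂ] V)).toMonoidHom with hu
      have hucoe : ∀ c : ℂˣ, ((u c : (V →ₗ[ℂ] V)ˣ) : V →ₗ[ℂ] V) = (c : ℂ) • 1 := by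
        intro c
        rw [hu, Units.coe_map]
        ext v
        simp [Module.algebraMap_end_apply]
      have hucent : ∀ (c : ℂˣ) (w : (V →ₗ[ℂ] V)ˣ), u c * w = w * u c := by
        intro c w
        apply Units.ext
        rw [Units.val_mul, Units.val_mul, hucoe c, smul_mul_assoc, mul_smul_comm, one_mul,
          mul_one]
      have hucent' : ∀ (c : ℂˣ) (w : (V →ₗ[ℂ] V)ˣ), (u c)⁻¹ * w = w * (u c)⁻¹ := by
        intro c w
        calc (u c)⁻¹ * w = (u c)⁻¹ * (w * u c) * (u c)⁻¹ := by group
          _ = (u c)⁻¹ * (u c * w) * (u c)⁻¹ := by rw [hucent]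
          _ = w * (u c)⁻¹ := by group
      have huinj : Function.Injective u := by
        intro c d hcd
        have h6 := congrArg (fun w : (V →ₗ[ℂ] V)ˣ => ((w : V →ₗ[ℂ] V)) v₀) hcd
        simp only [hucoe, LinearMap.smul_apply, Module.End.one_apply] at h6
        exact Units.ext (smul_left_injective ℂ hv₀ h6)
      have hmul : ∀ g h : G, ρ g * ρ h = u (α g h) * ρ (g * h) := by
        intro g h
        have h1 : (ρ g * ρ h * (ρ (g * h))⁻¹ : (V →ₗ[ℂ] V)ˣ) = u (α g h) :=
          Units.ext (by rw [hucoe]; exact hα g h)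
        calc ρ g * ρ h = (ρ g * ρ h * (ρ (g * h))⁻¹) * ρ (g * h) := by group
          _ = u (α g h) * ρ (g * h) := by rw [h1]
      have hcoc : ∀ g h k : G, α g h * α (g * h) k = α h k * α g (h * k) := by
        intro g h k
        apply huinj
        have hA : ρ g * ρ h * ρ k = (u (α g h) * u (α (g * h) k)) * ρ (g * h * k) := by
          rw [hmul g h, mul_assoc, hmul (g * h) k, ← mul_assoc]
        have hB : ρ g * ρ h * ρ k = (u (α h k) * u (α g (h * k))) * ρ (g * h * k) := by
          rw [mul_assoc, hmul h k]
          rw [show ρ g * (u (α h k) * ρ (h * k)) = u (α h k) * (ρ g * ρ (h * k)) by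
            rw [← mul_assoc, ← hucent (α h k) (ρ g), mul_assoc]]
          rw [hmul g (h * k), ← mul_assoc, mul_assoc g h k]
        rw [map_mul, map_mul]
        exact mul_right_cancel (hA.symm.trans hB)
      obtain ⟨β, hβ⟩ := hschur α hcoc
      have hhom : ∀ g h : G, (u (β (g * h)))⁻¹ * ρ (g * h)
          = ((u (β g))⁻¹ * ρ g) * ((u (β h))⁻¹ * ρ h) := by
        intro g h
        have hkey : (u (β g))⁻¹ * (u (β h))⁻¹ * u (α g h) = (u (β (g * h)))⁻¹ := by
          have h1 : u (α g h) = u (β g) * u (β h) * (u (β (g * h)))⁻¹ := by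
            rw [hβ g h, map_mul, map_mul, map_inv]
          rw [h1]
          have h2 : u (β g) * u (β h) = u (β h) * u (β g) := hucent _ _
          calc (u (β g))⁻¹ * (u (β h))⁻¹ * (u (β g) * u (β h) * (u (β (g * h)))⁻¹)
              = (u (β g))⁻¹ * (u (β h))⁻¹ * (u (β h) * u (β g) * (u (β (g * h)))⁻¹) := by
                rw [h2]
            _ = (u (β (g * h)))⁻¹ := by group
        calc (u (β (g * h)))⁻¹ * ρ (g * h)
            = ((u (β g))⁻¹ * (u (β h))⁻¹ * u (α g h)) * ρ (g * h) := by rw [hkey]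
          _ = (u (β g))⁻¹ * (u (β h))⁻¹ * (u (α g h) * ρ (g * h)) := by group
          _ = (u (β g))⁻¹ * (u (β h))⁻¹ * (ρ g * ρ h) := by rw [← hmul]
          _ = (u (β g))⁻¹ * (((u (β h))⁻¹ * ρ g) * ρ h) := by group
          _ = (u (β g))⁻¹ * ((ρ g * (u (β h))⁻¹) * ρ h) := by rw [hucent' (β h) (ρ g)]
          _ = ((u (β g))⁻¹ * ρ g) * ((u (β h))⁻¹ * ρ h) := by group
      set ρ' : G →* (V →ₗ[ℂ] V)ˣ :=
        MonoidHom.mk' (fun g => (u (β g))⁻¹ * ρ g) (fun g h => hhom g h) with hρ'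
      have happ : ∀ g : G, ρ' g = (u (β g))⁻¹ * ρ g := fun g => rfl
      have hrho : ∀ g : G, ρ g = u (β g) * ρ' g := by
        intro g
        rw [happ g]
        group
      have ebig : ∀ g h : G, (u (β g) * ρ' g) * (u (β h) * ρ' h) * (u (β g) * ρ' g)⁻¹
          = u (β h) * ρ' (g * h * g⁻¹) := by
        intro g h
        rw [mul_inv_rev]
        calc u (β g) * ρ' g * (u (β h) * ρ' h) * ((ρ' g)⁻¹ * (u (β g))⁻¹)
            = u (β g) * ((ρ' g * u (β h)) * (ρ' h * (ρ' g)⁻¹ * (u (β g))⁻¹)) := by group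
          _ = u (β g) * ((u (β h) * ρ' g) * (ρ' h * (ρ' g)⁻¹ * (u (β g))⁻¹)) := by
              rw [← hucent (β h) (ρ' g)]
          _ = (u (β g) * u (β h)) * ((ρ' g * ρ' h * (ρ' g)⁻¹) * (u (β g))⁻¹) := by group
          _ = (u (β g) * u (β h)) * ((u (β g))⁻¹ * (ρ' g * ρ' h * (ρ' g)⁻¹)) := by
              rw [← hucent' (β g) (ρ' g * ρ' h * (ρ' g)⁻¹)]
          _ = (u (β h) * u (β g)) * ((u (β g))⁻¹ * (ρ' g * ρ' h * (ρ' g)⁻¹)) := by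
              rw [hucent (β g) (u (β h))]
          _ = u (β h) * (ρ' g * ρ' h * (ρ' g)⁻¹) := by group
          _ = u (β h) * ρ' (g * h * g⁻¹) := by rw [map_mul, map_mul, map_inv]
      have hβinv : ∀ g h : G, β (g * h * g⁻¹) = β h := by
        intro g h
        apply huinj
        have hchain : u (β (g * h * g⁻¹)) * ρ' (g * h * g⁻¹)
            = u (β h) * ρ' (g * h * g⁻¹) := by
          calc u (β (g * h * g⁻¹)) * ρ' (g * h * g⁻¹) = ρ (g * h * g⁻¹) := (hrho _).symm
            _ = ρ g * ρ h * (ρ g)⁻¹ := hρ g h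
            _ = (u (β g) * ρ' g) * (u (β h) * ρ' h) * (u (β g) * ρ' g)⁻¹ := by
                rw [hrho g, hrho h]
            _ = u (β h) * ρ' (g * h * g⁻¹) := ebig g h
        exact mul_right_cancel hchain
      have hgirr : GrpIrred ρ' := by
        intro W hW
        apply hirr W
        intro x v hv
        have h7 : (ρ x : V →ₗ[ℂ] V) v = (β x : ℂ) • (ρ' x : V →ₗ[ℂ] V) v := by
          rw [hrho x, Units.val_mul, hucoe, Module.End.mul_apply, LinearMap.smul_apply,
            Module.End.one_apply]
        rw [h7]
        exact Submodule.smul_mem W _ (hW x v hv)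
      refine ⟨ρ', β, hgirr, hβinv, ?_⟩
      intro g
      rw [hrho g, Units.val_mul, hucoe, smul_mul_assoc, one_mul]
  · rintro ⟨ρ', χ, hirr', hχ, heq⟩ W hW
    apply hirr' W
    intro g v hv
    have h1 : (ρ g : V →ₗ[ℂ] V) v = (χ g : ℂ) • (ρ' g : V →ₗ[ℂ] V) v := by
      rw [heq g, LinearMap.smul_apply]
    have h2 : (ρ' g : V →ₗ[ℂ] V) v = (χ g : ℂ)⁻¹ • ((ρ g : V →ₗ[ℂ] V) v) := by
      rw [h1, inv_smul_smul₀ (Units.ne_zero (χ g))]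
    rw [h2]
    exact Submodule.smul_mem W _ (hW g v hv)
end

section
/- Let G and H be finite groups and θ : G → H a surjective group homomorphism such that ker θ is contained in both the center of G and the commutator subgroup of G, and such that for every ℂˣ-valued 2-cocycle α on H (trivial action) the pullback (g,g') ↦ α(θ(g), θ(g')) is a 2-coboundary on G (i.e. G is a Schur cover of H). Then a representation ρ : Conj(G) → GL(V) of the quandle Conj(G) over ℂ is irreducible if and only if there exist an irreducible group representation ρ' : G → GL(V) and a map χ : G → ℂˣ with χ(g h g⁻¹) = χ(h) for all g,h ∈ G, such that ρ(g) = χ(g) ρ'(g) for all g ∈ G. -/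
open scoped Quandles
open Polynomial

section Aux
variable {V : Type*} [AddCommGroup V] [Module ℂ V]

lemma aeval_inj_of_ne_zero (z : V →ₗ[ℂ] V)
    (hz : ∀ μ : ℂ, Function.Bijective (z - μ • (1 : V →ₗ[ℂ] V)))
    (q : ℂ[X]) (hq : q ≠ 0) : Function.Injective (aeval z q : V →ₗ[ℂ] V) := by
  suffices H : ∀ n (q : ℂ[X]), q ≠ 0 → q.natDegree = n →
      Function.Injective (aeval z q : V →ₗ[ℂ] V) from H _ q hq rfl
  intro n
  induction n using Nat.strong_induction_on with
  | _ n ih =>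
    intro q hq hdeg
    rcases Nat.eq_zero_or_pos n with h0 | h0
    · subst h0
      obtain ⟨c, rfl⟩ := Polynomial.natDegree_eq_zero.mp hdeg
      have hc : c ≠ 0 := fun h => hq (by simp [h])
      have : (aeval z (C c) : V →ₗ[ℂ] V) = c • 1 := by
        simp [aeval_C, Module.algebraMap_end_eq_smul_id, Module.End.one_eq_id]
      rw [this]
      intro a b hab
      simpa using smul_right_injective V hc (by simpa using hab)
    · have hd : q.degree ≠ 0 := by
        intro h
        rw [degree_eq_natDegree hq, hdeg] at h
        exact Nat.pos_iff_ne_zero.mp h0 (by exact_mod_cast h)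
      obtain ⟨r, hr⟩ := IsAlgClosed.exists_root q hd
      obtain ⟨q', rfl⟩ := Polynomial.dvd_iff_isRoot.mpr hr
      have hXr : (X - C r : ℂ[X]) ≠ 0 := X_sub_C_ne_zero r
      have hq' : q' ≠ 0 := right_ne_zero_of_mul hq
      have hdeg' : q'.natDegree < n := by
        rw [← hdeg, natDegree_mul hXr hq', natDegree_X_sub_C]; omega
      have hinj' := ih _ hdeg' q' hq' rfl
      have hXz : (aeval z (X - C r) : V →ₗ[ℂ] V) = z - r • 1 := by
        simp [Module.algebraMap_end_eq_smul_id, Module.End.one_eq_id]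
      rw [map_mul]
      intro a b hab
      apply hinj'
      apply (hz r).injective
      have : ∀ w, ((aeval z (X - C r) * aeval z q' : V →ₗ[ℂ] V)) w
          = (z - r • 1) ((aeval z q' : V →ₗ[ℂ] V) w) := by
        intro w; rw [Module.End.mul_apply, hXz]
      rw [← this, ← this, hab]

end Aux

section Aux2
variable {G : Type*} {V : Type*} [AddCommGroup V] [Module ℂ V]

/-- irreducibility property, inlined -/
lemma central_unit_scalar [Countable G] [Nontrivial V]
    (ρ : G → (V →ₗ[ℂ] V)ˣ)
    (hirr : ∀ W : Submodule ℂ V, (∀ x : G, ∀ v ∈ W, (ρ x : V →ₗ[ℂ] V) v ∈ W) → W = ⊥ ∨ W = ⊤)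
    (z : (V →ₗ[ℂ] V)ˣ) (hz : ∀ x : G, z * ρ x = ρ x * z) :
    ∃ μ : ℂˣ, (z : V →ₗ[ℂ] V) = (μ : ℂ) • 1 := by
  classical
  obtain ⟨v₀, hv₀⟩ := exists_ne (0 : V)
  by_cases hsc : ∃ μ : ℂ, (z : V →ₗ[ℂ] V) = μ • 1
  · obtain ⟨μ, hμ⟩ := hsc
    have hμ0 : μ ≠ 0 := by
      intro h
      apply hv₀
      have h1 : (↑z⁻¹ * ↑z : V →ₗ[ℂ] V) = 1 := by
        rw [← Units.val_mul]; simp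
      calc v₀ = (↑z⁻¹ * ↑z : V →ₗ[ℂ] V) v₀ := by rw [h1]; rfl
        _ = ((z⁻¹ : (V →ₗ[ℂ] V)ˣ) : V →ₗ[ℂ] V) ((z : V →ₗ[ℂ] V) v₀) := rfl
        _ = 0 := by rw [hμ, h]; simp
    exact ⟨Units.mk0 μ hμ0, hμ⟩
  exfalso
  -- commuting at linear map level
  have hzcomm : ∀ x : G, (z : V →ₗ[ℂ] V) * (ρ x : V →ₗ[ℂ] V) = (ρ x : V →ₗ[ℂ] V) * z := by
    intro x
    have := congrArg Units.val (hz x)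
    simpa [Units.val_mul] using this
  -- each z - μ • 1 is bijective
  have hbij : ∀ μ : ℂ, Function.Bijective ⇑((z : V →ₗ[ℂ] V) - μ • (1 : V →ₗ[ℂ] V)) := by
    intro μ
    set f : V →ₗ[ℂ] V := (z : V →ₗ[ℂ] V) - μ • (1 : V →ₗ[ℂ] V) with hf
    have hcomm : ∀ x : G, f * (ρ x : V →ₗ[ℂ] V) = (ρ x : V →ₗ[ℂ] V) * f := by
      intro x
      simp only [hf, sub_mul, mul_sub, hzcomm x, smul_mul_assoc, mul_smul_comm, one_mul, mul_one]
    have happly : ∀ (x : G) (v : V), f ((ρ x : V →ₗ[ℂ] V) v) = (ρ x : V →ₗ[ℂ] V) (f v) := by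
      intro x v
      have := congrArg (fun g : V →ₗ[ℂ] V => g v) (hcomm x)
      simpa [Module.End.mul_apply] using this
    have hfne : f ≠ 0 := by
      intro h
      exact hsc ⟨μ, by rw [← sub_eq_zero]; exact h⟩
    have hker : LinearMap.ker f = ⊥ := by
      rcases hirr (LinearMap.ker f) (fun x v hv => by
          rw [LinearMap.mem_ker] at hv ⊢
          rw [happly, hv, map_zero]) with h | h
      · exact h
      · exfalso
        apply hfne
        ext v
        have : v ∈ LinearMap.ker f := h ▸ Submodule.mem_top
        simpa using this
    have hrange : LinearMap.range f = ⊤ := by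
      rcases hirr (LinearMap.range f) (fun x v hv => by
          obtain ⟨w, rfl⟩ := hv
          exact ⟨(ρ x : V →ₗ[ℂ] V) w, happly x w⟩) with h | h
      · exfalso
        apply hfne
        ext v
        have : f v ∈ LinearMap.range f := ⟨v, rfl⟩
        rw [h] at this
        simpa using this
      · exact h
    exact ⟨LinearMap.ker_eq_bot.mp hker, LinearMap.range_eq_top.mp hrange⟩
  -- rank of V is countable
  let fam : List G → V := fun l => ((l.map ρ).prod : V →ₗ[ℂ] V) v₀
  have hfam_cons : ∀ (x : G) (l : List G), (ρ x : V →ₗ[ℂ] V) (fam l) = fam (x :: l) := by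
    intro x l
    simp only [fam, List.map_cons, List.prod_cons, Units.val_mul, Module.End.mul_apply]
  have hspan : Submodule.span ℂ (Set.range fam) = ⊤ := by
    rcases hirr (Submodule.span ℂ (Set.range fam)) (fun x v hv => by
        induction hv using Submodule.span_induction with
        | mem w hw =>
          obtain ⟨l, rfl⟩ := hw
          rw [hfam_cons]
          exact Submodule.subset_span ⟨x :: l, rfl⟩
        | zero => rw [map_zero]; exact Submodule.zero_mem _
        | add a b _ _ ha hb => rw [map_add]; exact Submodule.add_mem _ ha hb
        | smul c a _ ha => rw [map_smul]; exact Submodule.smul_mem _ _ ha) with h | h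
    · exfalso
      apply hv₀
      have : v₀ ∈ Submodule.span ℂ (Set.range fam) := by
        apply Submodule.subset_span
        exact ⟨[], by simp [fam]⟩
      rw [h] at this
      simpa using this
    · exact h
  have hrank : Module.rank ℂ V ≤ Cardinal.aleph0 := by
    have h1 : Module.rank ℂ ↥(Submodule.span ℂ (Set.range fam)) ≤
        Cardinal.mk (Set.range fam) := rank_span_le _
    rw [hspan, rank_top] at h1
    refine h1.trans ?_
    have : Countable (Set.range fam) := (Set.countable_range fam).to_subtype
    exact Cardinal.mk_le_aleph0
  -- resolvent family
  choose w hw using fun μ : ℂ => (hbij μ).surjective v₀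
  have hli : LinearIndependent ℂ w := by
    rw [linearIndependent_iff']
    intro s a hsum i hi
    by_contra hai
    set q : ℂ[X] := ∑ lam ∈ s, C (a lam) * ∏ mu ∈ s.erase lam, (X - C mu) with hqdef
    have haevalXC : ∀ lam : ℂ, (aeval (z : V →ₗ[ℂ] V) (X - C lam) : V →ₗ[ℂ] V)
        = (z : V →ₗ[ℂ] V) - lam • 1 := by
      intro lam
      simp [Module.algebraMap_end_eq_smul_id, Module.End.one_eq_id]
    have key : ∀ lam ∈ s, (aeval (z : V →ₗ[ℂ] V) (∏ mu ∈ s, (X - C mu)) : V →ₗ[ℂ] V) (w lam)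
        = (aeval (z : V →ₗ[ℂ] V) (∏ mu ∈ s.erase lam, (X - C mu)) : V →ₗ[ℂ] V) v₀ := by
      intro lam hlam
      rw [← Finset.prod_erase_mul s _ hlam, map_mul, Module.End.mul_apply, haevalXC, hw lam]
    have happ : (aeval (z : V →ₗ[ℂ] V) q : V →ₗ[ℂ] V) v₀ = 0 := by
      have expand : (aeval (z : V →ₗ[ℂ] V) q : V →ₗ[ℂ] V) v₀
          = ∑ lam ∈ s, a lam •
            ((aeval (z : V →ₗ[ℂ] V) (∏ mu ∈ s.erase lam, (X - C mu)) : V →ₗ[ℂ] V) v₀) := by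
        rw [hqdef, map_sum, LinearMap.sum_apply]
        refine Finset.sum_congr rfl fun lam _ => ?_
        rw [map_mul, Module.End.mul_apply]
        simp [aeval_C, Module.algebraMap_end_eq_smul_id, Module.End.one_eq_id]
      rw [expand]
      calc ∑ lam ∈ s, a lam •
            ((aeval (z : V →ₗ[ℂ] V) (∏ mu ∈ s.erase lam, (X - C mu)) : V →ₗ[ℂ] V) v₀)
          = ∑ lam ∈ s, a lam •
            ((aeval (z : V →ₗ[ℂ] V) (∏ mu ∈ s, (X - C mu)) : V →ₗ[ℂ] V) (w lam)) := by
            refine Finset.sum_congr rfl fun lam hlam => ?_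
            rw [key lam hlam]
        _ = (aeval (z : V →ₗ[ℂ] V) (∏ mu ∈ s, (X - C mu)) : V →ₗ[ℂ] V)
            (∑ lam ∈ s, a lam • w lam) := by
            rw [map_sum]
            refine Finset.sum_congr rfl fun lam _ => ?_
            rw [map_smul]
        _ = 0 := by rw [hsum, map_zero]
    have hqne : q ≠ 0 := by
      intro h0
      have heval : q.eval i = a i * ∏ mu ∈ s.erase i, (i - mu) := by
        rw [hqdef]
        rw [Polynomial.eval_finset_sum]
        rw [Finset.sum_eq_single_of_mem i hi]
        · simp [Polynomial.eval_prod]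
        · intro lam hlam hne
          have : i ∈ s.erase lam := Finset.mem_erase.mpr ⟨fun h => hne h.symm, hi⟩
          simp only [Polynomial.eval_mul, Polynomial.eval_prod]
          rw [Finset.prod_eq_zero this (by simp)]
          ring
      have hne : q.eval i ≠ 0 := by
        rw [heval]
        apply mul_ne_zero hai
        apply Finset.prod_ne_zero_iff.mpr
        intro mu hmu
        have := Finset.ne_of_mem_erase hmu
        exact sub_ne_zero.mpr (Ne.symm this)
      rw [h0] at hne
      simp at hne
    have hinj := aeval_inj_of_ne_zero (z : V →ₗ[ℂ] V) hbij q hqne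
    apply hv₀
    apply hinj
    rw [happ, map_zero]
  have h1 := hli.cardinal_lift_le_rank
  rw [Cardinal.mk_complex] at h1
  rw [Cardinal.lift_continuum] at h1
  have h2 : Cardinal.lift.{0} (Module.rank ℂ V) ≤ Cardinal.aleph0 := by
    have := Cardinal.lift_le.{0}.mpr hrank
    rwa [Cardinal.lift_aleph0] at this
  exact absurd (h1.trans h2) (not_le.mpr Cardinal.aleph0_lt_continuum)

end Aux2

section SUnit
variable {V : Type*} [AddCommGroup V] [Module ℂ V]

/-- scalar unit in `GL(V)` -/
noncomputable def sUnit (μ : ℂˣ) : (V →ₗ[ℂ] V)ˣ :=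
  Units.map (algebraMap ℂ (Module.End ℂ V)).toMonoidHom μ

lemma sUnit_val (μ : ℂˣ) : ((sUnit μ : (V →ₗ[ℂ] V)ˣ) : V →ₗ[ℂ] V) = (μ : ℂ) • 1 := by
  simp [sUnit, Module.algebraMap_end_eq_smul_id, Module.End.one_eq_id]

lemma sUnit_mul (μ ν : ℂˣ) : (sUnit (μ * ν) : (V →ₗ[ℂ] V)ˣ) = sUnit μ * sUnit ν := by
  simp [sUnit, map_mul]

lemma sUnit_comm (μ : ℂˣ) (u : (V →ₗ[ℂ] V)ˣ) : sUnit μ * u = u * sUnit μ := by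
  apply Units.ext
  rw [Units.val_mul, Units.val_mul, sUnit_val]
  rw [smul_mul_assoc, mul_smul_comm, one_mul, mul_one]

lemma sUnit_inj [Nontrivial V] {μ ν : ℂˣ} (h : (sUnit μ : (V →ₗ[ℂ] V)ˣ) = sUnit ν) :
    μ = ν := by
  obtain ⟨v₀, hv₀⟩ := exists_ne (0 : V)
  have := congrArg (fun u : (V →ₗ[ℂ] V)ˣ => (u : V →ₗ[ℂ] V) v₀) h
  simp only [sUnit_val, LinearMap.smul_apply, Module.End.one_apply] at this
  apply Units.ext
  have h2 : ((μ : ℂ) - ν) • v₀ = 0 := by rw [sub_smul, this, sub_self]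
  rcases smul_eq_zero.mp h2 with h3 | h3
  · exact sub_eq_zero.mp h3
  · exact absurd h3 hv₀

end SUnit

section SUnitExtra
variable {V : Type*} [AddCommGroup V] [Module ℂ V]
lemma sUnit_one : (sUnit 1 : (V →ₗ[ℂ] V)ˣ) = 1 := by simp [sUnit]

lemma sUnit_inv (μ : ℂˣ) : ((sUnit μ)⁻¹ : (V →ₗ[ℂ] V)ˣ) = sUnit μ⁻¹ := by
  simp [sUnit]

lemma sUnit_conj (a c : ℂˣ) (A B : (V →ₗ[ℂ] V)ˣ) :
    (sUnit a * A) * (sUnit c * B) * (sUnit a * A)⁻¹ = sUnit c * (A * B * A⁻¹) := by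
  have h1 : ((sUnit a * A)⁻¹ : (V →ₗ[ℂ] V)ˣ) = sUnit (a⁻¹) * A⁻¹ := by
    rw [mul_inv_rev, sUnit_inv, sUnit_comm]
  rw [h1]
  apply Units.ext
  have ha := Units.ne_zero a
  simp only [Units.val_mul, sUnit_val, smul_mul_assoc, mul_smul_comm, one_mul, mul_one,
    smul_smul, mul_assoc, Units.val_inv_eq_inv_val]
  congr 1
  field_simp

lemma sUnit_regroup (a c : ℂˣ) (A B : (V →ₗ[ℂ] V)ˣ) :
    (A * B) * (sUnit a * sUnit c) = (A * sUnit a) * (B * sUnit c) := by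
  apply Units.ext
  simp only [Units.val_mul, sUnit_val, smul_mul_assoc, mul_smul_comm, one_mul, mul_one,
    smul_smul, mul_assoc]
end SUnitExtra

/-- if `G` is a finite Schur cover of a finite group `H` (via `θ`), then a
representation of the quandle `Conj(G)` is irreducible iff it is the product of a
conjugation-invariant `ℂˣ`-valued function and an irreducible linear representation of `G`. -/


theorem stmt10 (G H : Type*) [Group G] [Finite G] [Group H] [Finite H]
    (θ : G →* H) (hsurj : Function.Surjective θ)
    (hcent : θ.ker ≤ Subgroup.center G) (hcomm : θ.ker ≤ commutator G)
    (hschur : ∀ α : H → H → ℂˣ,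
      (∀ g h k : H, α g h * α (g * h) k = α h k * α g (h * k)) →
      ∃ β : G → ℂˣ, ∀ g g' : G, α (θ g) (θ g') = β g * β g' * (β (g * g'))⁻¹)
    (V : Type*) [AddCommGroup V] [Module ℂ V]
    (ρ : G → (V →ₗ[ℂ] V)ˣ) (hρ : ∀ g h : G, ρ (g * h * g⁻¹) = ρ g * ρ h * (ρ g)⁻¹) :
    QdlIrred ρ ↔
      ∃ (ρ' : G →* (V →ₗ[ℂ] V)ˣ) (χ : G → ℂˣ), GrpIrred ρ' ∧
        (∀ g h : G, χ (g * h * g⁻¹) = χ h) ∧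
        ∀ g : G, (ρ g : V →ₗ[ℂ] V) = (χ g : ℂ) • (ρ' g : V →ₗ[ℂ] V) := by
  classical
  constructor
  · intro hirr
    by_cases hV : Subsingleton V
    · refine ⟨1, 1, ?_, fun g h => rfl, fun g => ?_⟩
      · intro W _
        left
        ext v
        simp [Subsingleton.elim v (0 : V)]
      · apply LinearMap.ext; intro v; exact Subsingleton.elim _ _
    · have : Nontrivial V := not_subsingleton_iff_nontrivial.mp hV
      have hscal : ∀ w : (V →ₗ[ℂ] V)ˣ, (∀ x : G, w * ρ x = ρ x * w) →
          ∃ μ : ℂˣ, w = sUnit μ := by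
        intro w hw
        obtain ⟨μ, hμ⟩ := central_unit_scalar ρ (fun W h => hirr W h) w hw
        exact ⟨μ, Units.ext (by rw [hμ, sUnit_val])⟩
      have hconj1 : ∀ u x : G, ρ u * ρ x * (ρ u)⁻¹ = ρ (u * x * u⁻¹) :=
        fun u x => (hρ u x).symm
      have hconj2 : ∀ u₁ u₂ x : G,
          (ρ u₁ * ρ u₂) * ρ x * (ρ u₁ * ρ u₂)⁻¹ = ρ (u₁ * u₂ * x * (u₁ * u₂)⁻¹) := by
        intro u₁ u₂ x
        have h1 : (ρ u₁ * ρ u₂) * ρ x * (ρ u₁ * ρ u₂)⁻¹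
            = ρ u₁ * (ρ u₂ * ρ x * (ρ u₂)⁻¹) * (ρ u₁)⁻¹ := by group
        rw [h1, hconj1, hconj1,
          show u₁ * (u₂ * x * u₂⁻¹) * u₁⁻¹ = u₁ * u₂ * x * (u₁ * u₂)⁻¹ by group]
      have hkc : ∀ a c : G, θ a = θ c → ∀ x : G, a * x * a⁻¹ = c * x * c⁻¹ := by
        intro a c hac x
        have hk : a * c⁻¹ ∈ Subgroup.center G := by
          apply hcent
          rw [MonoidHom.mem_ker, map_mul, map_inv, hac, mul_inv_cancel]
        have hc := Subgroup.mem_center_iff.mp hk (c * x * c⁻¹)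
        have h2 : a * x * a⁻¹ = (a * c⁻¹) * (c * x * c⁻¹) * (a * c⁻¹)⁻¹ := by group
        rw [h2, ← hc]
        group
      have comm_aux : ∀ (w : (V →ₗ[ℂ] V)ˣ) (u : G),
          (∀ x : G, w * ρ x * w⁻¹ = ρ (u * x * u⁻¹)) →
          ∀ x : G, ((ρ u)⁻¹ * w) * ρ x = ρ x * ((ρ u)⁻¹ * w) := by
        intro w u hw x
        have h' : w * ρ x = ρ (u * x * u⁻¹) * w := by
          rw [← hw x]; group
        have hvx : (ρ u)⁻¹ * ρ (u * x * u⁻¹) = ρ x * (ρ u)⁻¹ := by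
          rw [← hconj1 u x]; group
        calc (ρ u)⁻¹ * w * ρ x = (ρ u)⁻¹ * (w * ρ x) := by rw [mul_assoc]
          _ = (ρ u)⁻¹ * (ρ (u * x * u⁻¹) * w) := by rw [h']
          _ = ((ρ u)⁻¹ * ρ (u * x * u⁻¹)) * w := by rw [← mul_assoc]
          _ = (ρ x * (ρ u)⁻¹) * w := by rw [hvx]
          _ = ρ x * ((ρ u)⁻¹ * w) := by rw [mul_assoc]
      have scal_of_conj : ∀ (w : (V →ₗ[ℂ] V)ˣ) (u : G),
          (∀ x : G, w * ρ x * w⁻¹ = ρ (u * x * u⁻¹)) →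
          ∃ μ : ℂˣ, w = ρ u * sUnit μ := by
        intro w u hw
        obtain ⟨μ, hμ⟩ := hscal ((ρ u)⁻¹ * w) (comm_aux w u hw)
        exact ⟨μ, by rw [← hμ, mul_inv_cancel_left]⟩
      set s : H → G := Function.surjInv hsurj with hsdef
      have hs : ∀ h : H, θ (s h) = h := fun h => Function.surjInv_eq hsurj h
      have hδ : ∀ g : G, ∃ μ : ℂˣ, ρ (s (θ g)) = ρ g * sUnit μ := by
        intro g
        apply scal_of_conj
        intro x
        rw [hconj1, hkc (s (θ g)) g (hs (θ g)) x]
      choose δ hδ' using hδ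
      have hbex : ∀ h h' : H, ∃ μ : ℂˣ, ρ (s h) * ρ (s h') = ρ (s (h * h')) * sUnit μ := by
        intro h h'
        apply scal_of_conj
        intro x
        rw [hconj2, hkc (s h * s h') (s (h * h')) (by rw [map_mul, hs, hs, hs]) x]
      choose b hb' using hbex
      have hcoc : ∀ h h' h'' : H, b h h' * b (h * h') h'' = b h' h'' * b h (h' * h'') := by
        intro h h' h''
        have e1 : ρ (s h) * ρ (s h') * ρ (s h'')
            = ρ (s (h * h' * h'')) * sUnit (b (h * h') h'' * b h h') := by
          calc ρ (s h) * ρ (s h') * ρ (s h'')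
              = (ρ (s (h * h')) * sUnit (b h h')) * ρ (s h'') := by rw [hb']
            _ = ρ (s (h * h')) * ρ (s h'') * sUnit (b h h') := by
                rw [mul_assoc, sUnit_comm, ← mul_assoc]
            _ = (ρ (s (h * h' * h'')) * sUnit (b (h * h') h'')) * sUnit (b h h') := by
                rw [hb']
            _ = ρ (s (h * h' * h'')) * sUnit (b (h * h') h'' * b h h') := by
                rw [sUnit_mul, mul_assoc]
        have e2 : ρ (s h) * ρ (s h') * ρ (s h'')
            = ρ (s (h * h' * h'')) * sUnit (b h (h' * h'') * b h' h'') := by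
          calc ρ (s h) * ρ (s h') * ρ (s h'')
              = ρ (s h) * (ρ (s (h' * h'')) * sUnit (b h' h'')) := by
                rw [mul_assoc, hb']
            _ = ρ (s h) * ρ (s (h' * h'')) * sUnit (b h' h'') := by rw [mul_assoc]
            _ = (ρ (s (h * (h' * h''))) * sUnit (b h (h' * h''))) * sUnit (b h' h'') := by
                rw [hb']
            _ = ρ (s (h * h' * h'')) * sUnit (b h (h' * h'') * b h' h'') := by
                rw [sUnit_mul, mul_assoc, ← mul_assoc h h' h'']
        have e3 := mul_left_cancel (e1.symm.trans e2)
        have e4 := sUnit_inj (V := V) e3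
        rw [mul_comm (b h h'), mul_comm (b h' h'')]
        exact e4
      obtain ⟨β, hβ⟩ := hschur b hcoc
      set χ : G → ℂˣ := fun g => β g * (δ g)⁻¹ with hχdef
      set ρ'u : G → (V →ₗ[ℂ] V)ˣ := fun g => sUnit (χ g)⁻¹ * ρ g with hρ'def
      have hρx : ∀ x : G, ρ x = sUnit (χ x) * ρ'u x := by
        intro x
        rw [hρ'def]
        simp only []
        rw [← mul_assoc, ← sUnit_mul, mul_inv_cancel, sUnit_one, one_mul]
      have hρρ : ∀ g g' : G, ρ g * ρ g'
          = ρ (g * g') * sUnit (δ (g * g') * (b (θ g) (θ g') * ((δ g)⁻¹ * (δ g')⁻¹))) := by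
        intro g g'
        have hg : ∀ u : G, ρ u = ρ (s (θ u)) * sUnit (δ u)⁻¹ := by
          intro u
          rw [hδ' u, mul_assoc, ← sUnit_mul, mul_inv_cancel, sUnit_one, mul_one]
        calc ρ g * ρ g'
            = (ρ (s (θ g)) * sUnit (δ g)⁻¹) * (ρ (s (θ g')) * sUnit (δ g')⁻¹) := by
              rw [← hg, ← hg]
          _ = (ρ (s (θ g)) * ρ (s (θ g'))) * (sUnit (δ g)⁻¹ * sUnit (δ g')⁻¹) := by
              rw [mul_assoc, mul_assoc, ← mul_assoc (sUnit (δ g)⁻¹), sUnit_comm, mul_assoc]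
          _ = (ρ (s (θ g * θ g')) * sUnit (b (θ g) (θ g'))) * sUnit ((δ g)⁻¹ * (δ g')⁻¹) := by
              rw [hb', sUnit_mul]
          _ = ρ (s (θ (g * g'))) * sUnit (b (θ g) (θ g') * ((δ g)⁻¹ * (δ g')⁻¹)) := by
              rw [← map_mul]
              simp only [mul_assoc, ← sUnit_mul]
          _ = (ρ (g * g') * sUnit (δ (g * g'))) *
                sUnit (b (θ g) (θ g') * ((δ g)⁻¹ * (δ g')⁻¹)) := by
              rw [hδ']
          _ = ρ (g * g') * sUnit (δ (g * g') * (b (θ g) (θ g') * ((δ g)⁻¹ * (δ g')⁻¹))) := by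
              simp only [mul_assoc, ← sUnit_mul]
      have hmul' : ∀ g g' : G, ρ'u (g * g') = ρ'u g * ρ'u g' := by
        intro g g'
        have hsc : (χ g)⁻¹ * (χ g')⁻¹ *
            (δ (g * g') * (b (θ g) (θ g') * ((δ g)⁻¹ * (δ g')⁻¹))) = (χ (g * g'))⁻¹ := by
          rw [hβ g g']
          simp only [hχdef]
          apply Units.ext
          simp only [Units.val_mul, Units.val_inv_eq_inv_val]
          field_simp
        calc ρ'u (g * g') = sUnit (χ (g * g'))⁻¹ * ρ (g * g') := rfl
          _ = ρ (g * g') * sUnit (χ (g * g'))⁻¹ := by rw [sUnit_comm]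
          _ = ρ (g * g') *
              sUnit ((χ g)⁻¹ * (χ g')⁻¹ *
                (δ (g * g') * (b (θ g) (θ g') * ((δ g)⁻¹ * (δ g')⁻¹)))) := by rw [hsc]
          _ = (ρ (g * g') *
                sUnit (δ (g * g') * (b (θ g) (θ g') * ((δ g)⁻¹ * (δ g')⁻¹)))) *
              sUnit ((χ g)⁻¹ * (χ g')⁻¹) := by
              rw [mul_comm ((χ g)⁻¹ * (χ g')⁻¹), sUnit_mul, mul_assoc]
          _ = (ρ g * ρ g') * sUnit ((χ g)⁻¹ * (χ g')⁻¹) := by rw [← hρρ]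
          _ = ρ'u g * ρ'u g' := by
              rw [sUnit_mul, sUnit_regroup, ← sUnit_comm, ← sUnit_comm]
      set ρ' : G →* (V →ₗ[ℂ] V)ˣ := MonoidHom.mk' ρ'u hmul' with hρ'hom
      have hρ'app : ∀ g : G, ρ' g = sUnit (χ g)⁻¹ * ρ g := fun g => rfl
      have heq : ∀ g : G, (ρ g : V →ₗ[ℂ] V) = (χ g : ℂ) • (ρ' g : V →ₗ[ℂ] V) := by
        intro g
        have h1 : ρ g = sUnit (χ g) * ρ' g := hρx g
        rw [h1, Units.val_mul, sUnit_val, smul_mul_assoc, one_mul]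
      refine ⟨ρ', χ, ?_, ?_, heq⟩
      · intro W hW
        apply hirr W
        intro x v hv
        have h1 := hW x v hv
        have h2 : (ρ x : V →ₗ[ℂ] V) v = (χ x : ℂ) • (ρ' x : V →ₗ[ℂ] V) v := by
          rw [heq x]; rfl
        rw [h2]
        exact W.smul_mem _ h1
      · intro g h
        have h2 : ρ' (g * h * g⁻¹) = ρ' g * ρ' h * (ρ' g)⁻¹ := by
          rw [map_mul, map_mul, map_inv]
        have hρx' : ∀ x : G, ρ x = sUnit (χ x) * ρ' x := fun x => hρx x
        have h3 : sUnit (χ (g * h * g⁻¹)) * ρ' (g * h * g⁻¹)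
            = sUnit (χ h) * ρ' (g * h * g⁻¹) := by
          calc sUnit (χ (g * h * g⁻¹)) * ρ' (g * h * g⁻¹)
              = ρ (g * h * g⁻¹) := (hρx' _).symm
            _ = ρ g * ρ h * (ρ g)⁻¹ := hρ g h
            _ = (sUnit (χ g) * ρ' g) * (sUnit (χ h) * ρ' h) * (sUnit (χ g) * ρ' g)⁻¹ := by
                rw [← hρx', ← hρx']
            _ = sUnit (χ h) * (ρ' g * ρ' h * (ρ' g)⁻¹) := sUnit_conj _ _ _ _
            _ = sUnit (χ h) * ρ' (g * h * g⁻¹) := by rw [← h2]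
        exact sUnit_inj (V := V) (mul_right_cancel h3)
  · rintro ⟨ρ', χ, hirr', hχ, heq⟩ W hW
    apply hirr' W
    intro g v hv
    have h1 := hW g v hv
    rw [heq g] at h1
    rw [LinearMap.smul_apply] at h1
    have h2 := W.smul_mem ((χ g : ℂ)⁻¹) h1
    rwa [smul_smul, inv_mul_cancel₀ (Units.ne_zero (χ g)), one_smul] at h2
end

section
/- For a finite quandle Q, the abelianization of the enveloping group G(Q) is isomorphic to the free abelian group on the set of orbits of Q under the action of Inn(Q), via an isomorphism under which the abelianization map sends the generator φ_Q(x) to the basis element given by the orbit of x. -/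
open scoped Quandles
namespace Stmt11Aux

variable (Q : Type*) [Quandle Q]

/-- abbreviation for the abelianization generator map -/
noncomputable def ab (x : Q) : Abelianization (Rack.EnvelGroup Q) :=
  Abelianization.of (Rack.toEnvelGroup Q x)

lemma ab_act (z x : Q) : ab Q (z ◃ x) = ab Q x := by
  unfold ab
  rw [ShelfHom.map_act]
  simp only [Quandle.conj_act_eq_conj]
  rw [map_mul, map_mul, map_inv]
  rw [mul_comm]
  group

lemma ab_smul (g : QdlInn Q) (x : Q) : ab Q ((g : Equiv.Perm Q) x) = ab Q x := by
  obtain ⟨g, hg⟩ := g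
  induction hg using Subgroup.closure_induction generalizing x with
  | mem g hg =>
      obtain ⟨z, rfl⟩ := hg
      exact ab_act Q z x
  | one => rfl
  | mul g h _ _ ihg ihh =>
      simpa [Equiv.Perm.mul_apply] using (ihg (h x)).trans (ihh x)
  | inv g _ ih =>
      have := ih (g⁻¹ x)
      simpa using this.symm

lemma ab_orbit {x y : Q} (h : Quotient.mk (MulAction.orbitRel (QdlInn Q) Q) x
    = Quotient.mk (MulAction.orbitRel (QdlInn Q) Q) y) : ab Q x = ab Q y := by
  have h' : MulAction.orbitRel (QdlInn Q) Q x y := Quotient.exact h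
  obtain ⟨g, rfl⟩ := h'
  exact ab_smul Q g y

end Stmt11Aux

namespace Stmt11Aux

variable (Q : Type*) [Quandle Q]

abbrev O := Quotient (MulAction.orbitRel (QdlInn Q) Q)

abbrev mkO (x : Q) : O Q := Quotient.mk (MulAction.orbitRel (QdlInn Q) Q) x

lemma mkO_act (x y : Q) : mkO Q (x ◃ y) = mkO Q y := by
  apply Quotient.sound
  exact ⟨⟨Rack.act' x, Subgroup.subset_closure ⟨x, rfl⟩⟩, rfl⟩

/-- The shelf hom to the free abelian group on orbits. -/
def fwdShelf : Q →◃ Quandle.Conj (Multiplicative (FreeAbelianGroup (O Q))) where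
  toFun x := Multiplicative.ofAdd (FreeAbelianGroup.of (mkO Q x))
  map_act' := by
    intro x y
    simp only [Quandle.conj_act_eq_conj, mkO_act]
    rw [mul_comm]
    group

noncomputable def Φ : Abelianization (Rack.EnvelGroup Q) →*
    Multiplicative (FreeAbelianGroup (O Q)) :=
  Abelianization.lift (Rack.toEnvelGroup.map (fwdShelf Q))

noncomputable def kmap : O Q → Additive (Abelianization (Rack.EnvelGroup Q)) :=
  Quotient.lift (fun x => Additive.ofMul (ab Q x)) (by
    intro x y h
    exact congrArg Additive.ofMul (ab_orbit Q (Quotient.sound h)))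

noncomputable def Ψ : Multiplicative (FreeAbelianGroup (O Q)) →*
    Abelianization (Rack.EnvelGroup Q) :=
  AddMonoidHom.toMultiplicativeLeft (FreeAbelianGroup.lift (kmap Q))

lemma Φ_ab (x : Q) : Φ Q (ab Q x) = Multiplicative.ofAdd (FreeAbelianGroup.of (mkO Q x)) := by
  unfold Φ ab
  rw [Abelianization.lift_apply_of]
  rfl

lemma Ψ_of (x : Q) :
    Ψ Q (Multiplicative.ofAdd (FreeAbelianGroup.of (mkO Q x))) = ab Q x := by
  unfold Ψ kmap
  simp [AddMonoidHom.coe_toMultiplicativeLeft]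

lemma envel_hom_ext {G : Type*} [Group G] (g₁ g₂ : Rack.EnvelGroup Q →* G)
    (h : ∀ x : Q, g₁ (Rack.toEnvelGroup Q x) = g₂ (Rack.toEnvelGroup Q x)) : g₁ = g₂ := by
  have h1 : Rack.toEnvelGroup.map.symm g₁ = Rack.toEnvelGroup.map.symm g₂ :=
    DFunLike.ext _ _ h
  exact Rack.toEnvelGroup.map.symm.injective h1

lemma left_inv : ∀ a, Ψ Q (Φ Q a) = a := by
  have hcomp : (Ψ Q).comp (Φ Q) = MonoidHom.id _ := by
    apply Abelianization.hom_ext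
    apply envel_hom_ext
    intro x
    simp only [MonoidHom.comp_apply, MonoidHom.id_apply]
    show Ψ Q (Φ Q (ab Q x)) = ab Q x
    rw [Φ_ab, Ψ_of]
  intro a
  exact DFunLike.congr_fun hcomp a

lemma right_inv : ∀ b, Φ Q (Ψ Q b) = b := by
  intro b
  induction b using FreeAbelianGroup.induction_on with
  | zero => exact map_one ((Φ Q).comp (Ψ Q))
  | of o =>
      induction o using Quotient.ind with
      | _ x =>
        show Φ Q (Ψ Q (Multiplicative.ofAdd (FreeAbelianGroup.of (mkO Q x)))) = _
        rw [Ψ_of, Φ_ab]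
        rfl
  | neg o ih =>
      show Φ Q (Ψ Q (Multiplicative.ofAdd (-FreeAbelianGroup.of o))) = _
      have : Multiplicative.ofAdd (-FreeAbelianGroup.of o) =
        (Multiplicative.ofAdd (FreeAbelianGroup.of o))⁻¹ := rfl
      rw [this, map_inv, map_inv]
      exact congrArg (·⁻¹) ih
  | add b1 b2 ih1 ih2 =>
      show Φ Q (Ψ Q (Multiplicative.ofAdd (b1 + b2))) = _
      have : Multiplicative.ofAdd (b1 + b2) =
        Multiplicative.ofAdd b1 * Multiplicative.ofAdd b2 := rfl
      rw [this, map_mul, map_mul]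
      exact congrArg₂ (· * ·) ih1 ih2

noncomputable def eqv : Abelianization (Rack.EnvelGroup Q) ≃*
    Multiplicative (FreeAbelianGroup (O Q)) where
  toFun := Φ Q
  invFun := Ψ Q
  left_inv := left_inv Q
  right_inv := right_inv Q
  map_mul' := map_mul (Φ Q)

end Stmt11Aux


/-- the abelianization of `G(Q)` is isomorphic to the free abelian group on
the set of orbits of `Q` under `Inn(Q)`, the abelianization map sending `φ_Q(x)` to the
basis element given by the orbit of `x`. -/
theorem stmt11 (Q : Type*) [Quandle Q] [Finite Q] :
    ∃ e : Abelianization (Rack.EnvelGroup Q) ≃*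
        Multiplicative (FreeAbelianGroup (Quotient (MulAction.orbitRel (QdlInn Q) Q))),
      ∀ x : Q, e (Abelianization.of (Rack.toEnvelGroup Q x)) =
        Multiplicative.ofAdd
          (FreeAbelianGroup.of (Quotient.mk (MulAction.orbitRel (QdlInn Q) Q) x)) := by
  exact ⟨Stmt11Aux.eqv Q, fun x => Stmt11Aux.Φ_ab Q x⟩
end

section
/- Let Q be a finite quandle and Z₀ = ker θ_{G(Q)}. An element z ∈ Z₀ has finite order if and only if z lies in the commutator subgroup of G(Q). -/
open scoped Quandles
namespace Stmt12

variable {Q : Type*} [Quandle Q]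

/-- Interpret a `PreEnvelGroup` element in the enveloping group. -/
def emk (a : Rack.PreEnvelGroup Q) : Rack.EnvelGroup Q := ⟦a⟧

theorem mk_act (x y : Q) :
    Rack.toEnvelGroup Q (x ◃ y) =
      Rack.toEnvelGroup Q x * Rack.toEnvelGroup Q y * (Rack.toEnvelGroup Q x)⁻¹ := by
  have := (Rack.toEnvelGroup Q).map_act' (x := x) (y := y)
  rwa [Quandle.conj_act_eq_conj] at this

theorem thetaG_mk (x : Q) :
    ((QdlThetaG Q (Rack.toEnvelGroup Q x) : QdlInn Q) : Equiv.Perm Q) = Rack.act' x := rfl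

theorem envel_hom_ext {H : Type*} [Group H] {g₁ g₂ : Rack.EnvelGroup Q →* H}
    (h : ∀ x : Q, g₁ (Rack.toEnvelGroup Q x) = g₂ (Rack.toEnvelGroup Q x)) : g₁ = g₂ := by
  ext z
  induction z using Quotient.inductionOn with
  | h a =>
    induction a with
    | unit =>
      show g₁ (emk .unit) = g₂ (emk .unit)
      rw [show emk (.unit : Rack.PreEnvelGroup Q) = 1 from rfl, map_one, map_one]
    | incl x => exact h x
    | mul a b iha ihb =>
      show g₁ (emk (a.mul b)) = g₂ (emk (a.mul b))
      rw [show emk (a.mul b) = emk a * emk b from rfl, map_mul, map_mul]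
      exact congrArg₂ (· * ·) iha ihb
    | inv a iha =>
      show g₁ (emk a.inv) = g₂ (emk a.inv)
      rw [show emk a.inv = (emk a)⁻¹ from rfl, map_inv, map_inv]
      exact congrArg (·⁻¹) iha

theorem envel_closure :
    Subgroup.closure (Set.range fun x : Q => Rack.toEnvelGroup Q x) = ⊤ := by
  rw [Subgroup.eq_top_iff']
  intro g
  induction g using Quotient.inductionOn with
  | h a =>
    induction a with
    | unit => exact one_mem _
    | incl x => exact Subgroup.subset_closure ⟨x, rfl⟩
    | mul a b iha ihb => exact mul_mem iha ihb
    | inv a iha => exact inv_mem iha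

theorem conj_mk (g : Rack.EnvelGroup Q) : ∀ y : Q,
    g * Rack.toEnvelGroup Q y * g⁻¹ =
      Rack.toEnvelGroup Q (((QdlThetaG Q g : QdlInn Q) : Equiv.Perm Q) y) := by
  induction g using Quotient.inductionOn with
  | h a =>
    induction a with
    | unit =>
      intro y
      show (1 : Rack.EnvelGroup Q) * Rack.toEnvelGroup Q y * (1 : Rack.EnvelGroup Q)⁻¹ =
        Rack.toEnvelGroup Q (((QdlThetaG Q (1 : Rack.EnvelGroup Q) : QdlInn Q) : Equiv.Perm Q) y)
      rw [one_mul, inv_one, mul_one, map_one, OneMemClass.coe_one, Equiv.Perm.one_apply]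
    | incl x =>
      intro y
      show Rack.toEnvelGroup Q x * Rack.toEnvelGroup Q y * (Rack.toEnvelGroup Q x)⁻¹ =
        Rack.toEnvelGroup Q (((QdlThetaG Q (Rack.toEnvelGroup Q x) : QdlInn Q) : Equiv.Perm Q) y)
      rw [thetaG_mk, Rack.act'_apply, mk_act]
    | mul a b iha ihb =>
      intro y
      have iha' : ∀ y : Q, emk a * Rack.toEnvelGroup Q y * (emk a)⁻¹ =
          Rack.toEnvelGroup Q (((QdlThetaG Q (emk a) : QdlInn Q) : Equiv.Perm Q) y) := iha
      have ihb' : ∀ y : Q, emk b * Rack.toEnvelGroup Q y * (emk b)⁻¹ =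
          Rack.toEnvelGroup Q (((QdlThetaG Q (emk b) : QdlInn Q) : Equiv.Perm Q) y) := ihb
      show emk a * emk b * Rack.toEnvelGroup Q y * (emk a * emk b)⁻¹ =
        Rack.toEnvelGroup Q (((QdlThetaG Q (emk a * emk b) : QdlInn Q) : Equiv.Perm Q) y)
      have h1 : emk a * emk b * Rack.toEnvelGroup Q y * (emk a * emk b)⁻¹ =
          emk a * (emk b * Rack.toEnvelGroup Q y * (emk b)⁻¹) * (emk a)⁻¹ := by group
      rw [h1, ihb' y, iha', map_mul, Subgroup.coe_mul, Equiv.Perm.mul_apply]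
    | inv a iha =>
      intro y
      have iha' : ∀ y : Q, emk a * Rack.toEnvelGroup Q y * (emk a)⁻¹ =
          Rack.toEnvelGroup Q (((QdlThetaG Q (emk a) : QdlInn Q) : Equiv.Perm Q) y) := iha
      show (emk a)⁻¹ * Rack.toEnvelGroup Q y * ((emk a)⁻¹)⁻¹ =
        Rack.toEnvelGroup Q (((QdlThetaG Q ((emk a)⁻¹) : QdlInn Q) : Equiv.Perm Q) y)
      rw [map_inv, inv_inv]
      have key := iha' ((((QdlThetaG Q (emk a) : QdlInn Q) : Equiv.Perm Q))⁻¹ y)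
      rw [show ∀ (σ : Equiv.Perm Q) (y : Q), σ (σ⁻¹ y) = y from fun σ y => σ.apply_symm_apply y] at key
      rw [show ((((QdlThetaG Q (emk a))⁻¹ : QdlInn Q) : Equiv.Perm Q)) =
        (((QdlThetaG Q (emk a) : QdlInn Q) : Equiv.Perm Q))⁻¹ from rfl]
      rw [← key]
      group

theorem z0_le_center : QdlZ0 Q ≤ Subgroup.center (Rack.EnvelGroup Q) := by
  intro z hz
  rw [Subgroup.mem_center_iff]
  intro g
  have hg : g ∈ Subgroup.closure (Set.range fun x : Q => Rack.toEnvelGroup Q x) := by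
    rw [envel_closure]; trivial
  induction hg using Subgroup.closure_induction with
  | mem x hx =>
    obtain ⟨y, rfl⟩ := hx
    have h := conj_mk z y
    rw [show QdlThetaG Q z = 1 from hz, OneMemClass.coe_one, Equiv.Perm.one_apply] at h
    calc Rack.toEnvelGroup Q y * z = (z * Rack.toEnvelGroup Q y * z⁻¹) * z := by rw [h]
      _ = z * Rack.toEnvelGroup Q y := by group
  | one => rw [one_mul, mul_one]
  | mul x y hx hy ihx ihy => rw [mul_assoc, ihy, ← mul_assoc, ihx, mul_assoc]
  | inv x hx ihx =>
    calc x⁻¹ * z = x⁻¹ * (z * x) * x⁻¹ := by group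
      _ = x⁻¹ * (x * z) * x⁻¹ := by rw [← ihx]
      _ = z * x⁻¹ := by group

end Stmt12

namespace Stmt12

variable (Q : Type*) [Quandle Q]

/-- The orbit relation on a quandle. -/
def orbRel : Q → Q → Prop := fun y z => ∃ x : Q, x ◃ y = z

/-- The set of orbits. -/
def Orb := Quot (orbRel Q)

/-- The free abelian group on the set of orbits, written multiplicatively. -/
abbrev OrbGrp := Multiplicative (Orb Q →₀ ℤ)

/-- The quandle morphism `Q → Conj (OrbGrp Q)`. -/
noncomputable def fChar : ShelfHom Q (Quandle.Conj (OrbGrp Q)) where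
  toFun x := Multiplicative.ofAdd (Finsupp.single (Quot.mk (orbRel Q) x) 1)
  map_act' := by
    intro x y
    rw [Quandle.conj_act_eq_conj, mul_inv_cancel_comm]
    show Multiplicative.ofAdd (Finsupp.single (Quot.mk (orbRel Q) (x ◃ y)) 1) =
      Multiplicative.ofAdd (Finsupp.single (Quot.mk (orbRel Q) y) 1)
    rw [(Quot.sound (⟨x, rfl⟩ : orbRel Q y (x ◃ y)) :
      Quot.mk (orbRel Q) y = Quot.mk (orbRel Q) (x ◃ y))]

/-- The induced morphism `G(Q) →* OrbGrp Q`. -/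
noncomputable def bigF : Rack.EnvelGroup Q →* OrbGrp Q := Rack.toEnvelGroup.map (fChar Q)

theorem bigF_mk (x : Q) :
    bigF Q (Rack.toEnvelGroup Q x) =
      Multiplicative.ofAdd (Finsupp.single (Quot.mk (orbRel Q) x) 1) := rfl

/-- Orbit-indexed generators of the abelianization. -/
def gOrb : Orb Q → Additive (Abelianization (Rack.EnvelGroup Q)) :=
  Quot.lift (fun x => Additive.ofMul (Abelianization.of (Rack.toEnvelGroup Q x))) (by
    rintro y z ⟨x, rfl⟩
    apply congrArg Additive.ofMul
    rw [mk_act, map_mul, map_mul, map_inv, mul_inv_cancel_comm])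

/-- The inverse homomorphism on the additive level. -/
noncomputable def psi0 : (Orb Q →₀ ℤ) →+ Additive (Abelianization (Rack.EnvelGroup Q)) :=
  Finsupp.liftAddHom fun o => zmultiplesHom _ (gOrb Q o)

/-- The homomorphism `OrbGrp Q →* Abelianization G(Q)`. -/
noncomputable def psi : OrbGrp Q →* Abelianization (Rack.EnvelGroup Q) where
  toFun a := Additive.toMul (psi0 Q (Multiplicative.toAdd a))
  map_one' := by simp
  map_mul' a b := by simp

theorem psi_bigF_mk (x : Q) :
    psi Q (bigF Q (Rack.toEnvelGroup Q x)) = Abelianization.of (Rack.toEnvelGroup Q x) := by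
  rw [bigF_mk]
  show Additive.toMul (psi0 Q (@Finsupp.single (Orb Q) ℤ _ (Quot.mk (orbRel Q) x) 1)) = _
  erw [psi0, Finsupp.liftAddHom_apply_single, zmultiplesHom_apply, one_zsmul]
  rfl

open scoped commutatorElement in
theorem comm_central {G : Type*} [Group G] (a b z w : G)
    (hz : ∀ x, x * z = z * x) (hw : ∀ x, x * w = w * x) : ⁅a * z, b * w⁆ = ⁅a, b⁆ := by
  have h1 : z * (b * w) = (b * w) * z := (hz (b * w)).symm
  have h2 : w * a⁻¹ = a⁻¹ * w := (hw a⁻¹).symm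
  calc ⁅a * z, b * w⁆ = a * (z * (b * w)) * z⁻¹ * a⁻¹ * w⁻¹ * b⁻¹ := by
        rw [commutatorElement_def]; group
    _ = a * ((b * w) * z) * z⁻¹ * a⁻¹ * w⁻¹ * b⁻¹ := by rw [h1]
    _ = a * b * (w * a⁻¹) * w⁻¹ * b⁻¹ := by group
    _ = a * b * (a⁻¹ * w) * w⁻¹ * b⁻¹ := by rw [h2]
    _ = ⁅a, b⁆ := by rw [commutatorElement_def]; group

open scoped commutatorElement in
theorem finite_commutatorSet (G : Type*) [Group G]
    [Finite (G ⧸ Subgroup.center G)] : Finite (commutatorSet G) := by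
  let f : (G ⧸ Subgroup.center G) × (G ⧸ Subgroup.center G) → G := fun p =>
    Quotient.liftOn₂' p.1 p.2 (fun a b => ⁅a, b⁆) (by
      intro a b c d hac hbd
      have hac' : a⁻¹ * c ∈ Subgroup.center G := QuotientGroup.leftRel_apply.mp hac
      have hbd' : b⁻¹ * d ∈ Subgroup.center G := QuotientGroup.leftRel_apply.mp hbd
      have hc : c = a * (a⁻¹ * c) := by group
      have hd : d = b * (b⁻¹ * d) := by group
      show ⁅a, b⁆ = ⁅c, d⁆
      rw [hc, hd, comm_central a b _ _ (Subgroup.mem_center_iff.mp hac')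
        (Subgroup.mem_center_iff.mp hbd')])
  have hsub : commutatorSet G ⊆ Set.range f := by
    rintro g ⟨g₁, g₂, rfl⟩
    exact ⟨((g₁ : G ⧸ Subgroup.center G), (g₂ : G ⧸ Subgroup.center G)), rfl⟩
  exact (Set.Finite.subset (Set.finite_range f) hsub).to_subtype

end Stmt12

/-- an element of `Z₀ = ker θ_{G(Q)}` (`Q` a finite quandle) has finite order
iff it lies in the commutator subgroup of `G(Q)`. -/
theorem stmt12 (Q : Type*) [Quandle Q] [Finite Q]
    (z : Rack.EnvelGroup Q) (hz : z ∈ QdlZ0 Q) :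
    IsOfFinOrder z ↔ z ∈ commutator (Rack.EnvelGroup Q) := by
  constructor
  · intro hfin
    obtain ⟨n, hn, hzn⟩ := hfin.exists_pow_eq_one
    have hF : Stmt12.bigF Q z ^ n = 1 := by rw [← map_pow, hzn, map_one]
    have h0 : Multiplicative.toAdd (Stmt12.bigF Q z) = 0 := by
      have h1 : n • Multiplicative.toAdd (Stmt12.bigF Q z) = 0 := by
        rw [← toAdd_pow, hF]; rfl
      ext o
      have h2 := congrArg (fun v : Stmt12.Orb Q →₀ ℤ => v o) h1
      simp only [Finsupp.smul_apply, Finsupp.coe_zero, Pi.zero_apply, smul_eq_mul,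
        nsmul_eq_mul] at h2
      rcases mul_eq_zero.mp h2 with h | h
      · exact absurd h (Nat.cast_ne_zero.mpr hn.ne')
      · simpa using h
    have hF1 : Stmt12.bigF Q z = 1 := by
      rw [← toAdd_eq_zero]; exact h0
    have hkey : (Stmt12.psi Q).comp (Stmt12.bigF Q) = Abelianization.of :=
      Stmt12.envel_hom_ext fun x => Stmt12.psi_bigF_mk Q x
    have hof : Abelianization.of z = 1 := by
      have := DFunLike.congr_fun hkey z
      rw [MonoidHom.comp_apply, hF1, map_one] at this
      exact this.symm
    exact (QuotientGroup.eq_one_iff z).mp hof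
  · intro hcomm
    haveI hnorm : (QdlZ0 Q).Normal := (QdlThetaG Q).normal_ker
    haveI : Finite (Rack.EnvelGroup Q ⧸ QdlZ0 Q) := by
      have e : (Rack.EnvelGroup Q ⧸ (QdlThetaG Q).ker) ≃ (QdlThetaG Q).range :=
        (QuotientGroup.quotientKerEquivRange (QdlThetaG Q)).toEquiv
      exact Finite.of_equiv _ e.symm
    haveI : Finite (Rack.EnvelGroup Q ⧸ Subgroup.center (Rack.EnvelGroup Q)) := by
      have hle : QdlZ0 Q ≤ (Subgroup.center (Rack.EnvelGroup Q)).comap (MonoidHom.id _) := by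
        simpa using Stmt12.z0_le_center (Q := Q)
      exact Finite.of_surjective
        (QuotientGroup.map (QdlZ0 Q) (Subgroup.center _) (MonoidHom.id _) hle)
        fun q => QuotientGroup.induction_on q fun g =>
          ⟨QuotientGroup.mk g, by rw [QuotientGroup.map_mk]; rfl⟩
    haveI : Finite (commutatorSet (Rack.EnvelGroup Q)) := Stmt12.finite_commutatorSet _
    haveI : Finite (commutator (Rack.EnvelGroup Q)) := inferInstance
    have h := isOfFinOrder_of_finite (⟨z, hcomm⟩ : commutator (Rack.EnvelGroup Q))
    obtain ⟨n, hn, h1⟩ := h.exists_pow_eq_one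
    refine isOfFinOrder_iff_pow_eq_one.mpr ⟨n, hn, ?_⟩
    exact congrArg Subtype.val h1
end
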